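/- arXiv:2006.11166 — 5 statements merged into one kernel-verified Lean document; each statement's English description precedes it below -/
import Mathlib

section
/- Let p be a probability measure supported in the closed ball of radius ρ in ℝ^d, and let p_{σ²} = p ∗ g_{σ²} be its convolution with a centered Gaussian of covariance σ²I. Then the Hessian of log p_{σ²} at any point x equals (1/σ⁴)(Σ_x − σ² I), where Σ_x is the covariance matrix of the probability measure q_x on the support of p with density proportional to y ↦ g_{σ²}(x − y) with respect to p. -/
open MeasureTheory Real
open scoped RealInnerProductSpace

set_option synthInstance.maxHeartbeats 1000000
set_option maxHeartbeats 1000000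

noncomputable section

/-- Density of the centered Gaussian `N(0, σ²I)` on `ℝ^d`. -/
def gaussDensity (d : ℕ) (σ : ℝ) (z : EuclideanSpace ℝ (Fin d)) : ℝ :=
  (2 * Real.pi * σ ^ 2) ^ (-(d : ℝ) / 2) * Real.exp (-‖z‖ ^ 2 / (2 * σ ^ 2))

/-- The Gaussian smoothing `p_{σ²}(x) = ∫ g_{σ²}(x−y) dp(y)`. -/
def smoothedDensity (d : ℕ) (σ : ℝ) (p : Measure (EuclideanSpace ℝ (Fin d)))
    (x : EuclideanSpace ℝ (Fin d)) : ℝ :=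
  ∫ y, gaussDensity d σ (x - y) ∂p

/-- The covariance quadratic form `⟨u, Σ_x v⟩` of the tilted measure `q_x` with density
`g_{σ²}(x−·)/p_{σ²}(x)` with respect to `p`. -/
def tiltedCov (d : ℕ) (σ : ℝ) (p : Measure (EuclideanSpace ℝ (Fin d)))
    (x u v : EuclideanSpace ℝ (Fin d)) : ℝ :=
  (∫ y, (⟪y, u⟫ * ⟪y, v⟫) * (gaussDensity d σ (x - y) / smoothedDensity d σ p x) ∂p) -
    (∫ y, ⟪y, u⟫ * (gaussDensity d σ (x - y) / smoothedDensity d σ p x) ∂p) *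
      (∫ y, ⟪y, v⟫ * (gaussDensity d σ (x - y) / smoothedDensity d σ p x) ∂p)

namespace Stmt0Aux

abbrev Eu (d : ℕ) := EuclideanSpace ℝ (Fin d)

/-- The normalizing constant of the Gaussian density. -/
def gC (d : ℕ) (σ : ℝ) : ℝ := (2 * Real.pi * σ ^ 2) ^ (-(d : ℝ) / 2)

/-- The Fréchet derivative of `w ↦ g_{σ²}(w - y)` at `x`. -/
def Dg (d : ℕ) (σ : ℝ) (x y : Eu d) : Eu d →L[ℝ] ℝ :=
  (-(σ ^ 2)⁻¹ * gaussDensity d σ (x - y)) • (innerSL ℝ (x - y))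

variable {d : ℕ} {σ : ℝ}

lemma gC_pos (hσ : σ ≠ 0) : 0 < gC d σ :=
  Real.rpow_pos_of_pos (by positivity) _

lemma gauss_pos (hσ : σ ≠ 0) (z : Eu d) : 0 < gaussDensity d σ z :=
  mul_pos (gC_pos hσ) (Real.exp_pos _)

lemma gauss_le (hσ : σ ≠ 0) (z : Eu d) : gaussDensity d σ z ≤ gC d σ := by
  have h1 : Real.exp (-‖z‖ ^ 2 / (2 * σ ^ 2)) ≤ 1 := by
    rw [Real.exp_le_one_iff]
    apply div_nonpos_of_nonpos_of_nonneg
    · simp [sq_nonneg]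
    · positivity
  calc gaussDensity d σ z ≤ gC d σ * 1 := by
        unfold gaussDensity gC
        exact mul_le_mul_of_nonneg_left h1 (gC_pos hσ).le
    _ = gC d σ := mul_one _

lemma gauss_cont : Continuous (gaussDensity d σ) := by
  unfold gaussDensity
  exact continuous_const.mul (Real.continuous_exp.comp
    (((continuous_norm.pow 2).neg).div_const _))

lemma Dg_cont (x : Eu d) : Continuous (fun y => Dg d σ x y) := by
  unfold Dg
  exact ((continuous_const.mul (gauss_cont.comp (continuous_const.sub continuous_id)))).smul
    ((innerSL ℝ).continuous.comp (continuous_const.sub continuous_id))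

lemma Dg_apply (x y u : Eu d) :
    Dg d σ x y u = -(σ ^ 2)⁻¹ * gaussDensity d σ (x - y) * ⟪x - y, u⟫ := by
  simp only [Dg, ContinuousLinearMap.smul_apply, innerSL_apply_apply, smul_eq_mul, mul_assoc]

lemma Dg_norm_le (hσ : σ ≠ 0) (x y : Eu d) :
    ‖Dg d σ x y‖ ≤ (σ ^ 2)⁻¹ * gC d σ * ‖x - y‖ := by
  unfold Dg
  rw [norm_smul (-(σ ^ 2)⁻¹ * gaussDensity d σ (x - y)) (innerSL ℝ (x - y)),
    innerSL_apply_norm]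
  have : ‖-(σ ^ 2)⁻¹ * gaussDensity d σ (x - y)‖ = (σ ^ 2)⁻¹ * gaussDensity d σ (x - y) := by
    rw [Real.norm_eq_abs, abs_mul, abs_neg, abs_of_nonneg (by positivity),
      abs_of_nonneg (gauss_pos hσ _).le]
  rw [this]
  gcongr
  exact gauss_le hσ _

lemma hasFDerivAt_gauss (hσ : σ ≠ 0) (y x : Eu d) :
    HasFDerivAt (fun w => gaussDensity d σ (w - y)) (Dg d σ x y) x := by
  have hfun : (fun w : Eu d => gaussDensity d σ (w - y))
      = fun w => gC d σ * Real.exp (-(2 * σ ^ 2)⁻¹ * ‖w - y‖ ^ 2) := by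
    funext w
    unfold gaussDensity gC
    congr 2
    rw [div_eq_mul_inv]; ring
  rw [hfun]
  have h1 : HasFDerivAt (fun w : Eu d => w - y) (ContinuousLinearMap.id ℝ (Eu d)) x :=
    (hasFDerivAt_id x).sub_const y
  have h2 := h1.norm_sq
  have h3 := ((h2.const_mul (-(2 * σ ^ 2)⁻¹)).exp).const_mul (gC d σ)
  refine h3.congr_fderiv ?_
  refine ContinuousLinearMap.ext fun u => ?_
  rw [Dg_apply]
  simp only [ContinuousLinearMap.smul_apply, ContinuousLinearMap.coe_smul', Pi.smul_apply,
    ContinuousLinearMap.coe_comp', Function.comp_apply, ContinuousLinearMap.coe_id', id_eq,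
    innerSL_apply_apply, smul_eq_mul]
  unfold gaussDensity gC
  rw [div_eq_mul_inv]
  rw [mul_inv]
  ring

/-- Differentiation under the integral sign for Gaussian-weighted integrals of a
bounded continuous weight `φ`. -/
lemma key {ρ : ℝ} (hσ : σ ≠ 0) {p : Measure (Eu d)} [IsProbabilityMeasure p]
    (hae : ∀ᵐ y ∂p, ‖y‖ ≤ ρ) {V : Type} [NormedAddCommGroup V] [NormedSpace ℝ V]
    (x : Eu d) (φ : Eu d → V) (hφ : Continuous φ) (K : ℝ)
    (hK : ∀ y : Eu d, ‖y‖ ≤ ρ → ‖φ y‖ ≤ K) :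
    Integrable (fun y => gaussDensity d σ (x - y) • φ y) p ∧
    Integrable (fun y => (Dg d σ x y).smulRight (φ y)) p ∧
    HasFDerivAt (fun w => ∫ y, gaussDensity d σ (w - y) • φ y ∂p)
      (∫ y, (Dg d σ x y).smulRight (φ y) ∂p) x := by
  have hgC : 0 < gC d σ := gC_pos hσ
  have hσ2 : 0 < (σ ^ 2)⁻¹ := by positivity
  have hFm : ∀ w : Eu d, AEStronglyMeasurable (fun y => gaussDensity d σ (w - y) • φ y) p :=
    fun w => ((gauss_cont.comp (continuous_const.sub continuous_id)).smul hφ).aestronglyMeasurable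
  have hFint : ∀ w : Eu d, Integrable (fun y => gaussDensity d σ (w - y) • φ y) p := by
    intro w
    refine Integrable.mono' (integrable_const (gC d σ * K)) (hFm w) ?_
    filter_upwards [hae] with y hy
    rw [norm_smul, Real.norm_eq_abs, abs_of_nonneg (gauss_pos hσ _).le]
    exact mul_le_mul (gauss_le hσ _) (hK y hy) (norm_nonneg _) (gC_pos hσ).le
  have hF'm : ∀ w : Eu d, AEStronglyMeasurable (fun y => (Dg d σ w y).smulRight (φ y)) p := by
    intro w
    exact (((ContinuousLinearMap.smulRightL ℝ (Eu d) V).continuous₂.comp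
      ((Dg_cont w).prodMk hφ))).aestronglyMeasurable
  have hF'int : Integrable (fun y => (Dg d σ x y).smulRight (φ y)) p := by
    refine Integrable.mono' (integrable_const ((σ ^ 2)⁻¹ * gC d σ * (‖x‖ + ρ) * K)) (hF'm x) ?_
    filter_upwards [hae] with y hy
    rw [ContinuousLinearMap.norm_smulRight_apply]
    have h1 : ‖x - y‖ ≤ ‖x‖ + ρ := (norm_sub_le x y).trans (by linarith)
    have hρ0 : 0 ≤ ρ := le_trans (norm_nonneg y) hy
    have h2 := (Dg_norm_le hσ x y).trans
      (mul_le_mul_of_nonneg_left h1 (mul_pos hσ2 hgC).le)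
    exact mul_le_mul h2 (hK y hy) (norm_nonneg _)
      (mul_nonneg (mul_pos hσ2 hgC).le (by positivity))
  refine ⟨hFint x, hF'int, ?_⟩
  apply hasFDerivAt_integral_of_dominated_of_fderiv_le (s := Metric.ball x 1) (Metric.ball_mem_nhds x one_pos)
    (Filter.Eventually.of_forall fun w => hFm w) (hFint x) (hF'm x)
    (bound := fun _ => (σ ^ 2)⁻¹ * gC d σ * (1 + ‖x‖ + ρ) * K)
  · filter_upwards [hae] with y hy w hw
    rw [ContinuousLinearMap.norm_smulRight_apply]
    have h1 : ‖w - y‖ ≤ 1 + ‖x‖ + ρ := by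
      have h0 : ‖w - y‖ ≤ ‖w - x‖ + ‖x - y‖ := norm_sub_le_norm_sub_add_norm_sub w x y
      have h2 : ‖w - x‖ < 1 := by rwa [Metric.mem_ball, dist_eq_norm] at hw
      have h3 : ‖x - y‖ ≤ ‖x‖ + ρ := (norm_sub_le x y).trans (by linarith)
      linarith
    have hρ0 : 0 ≤ ρ := le_trans (norm_nonneg y) hy
    have h2 := (Dg_norm_le hσ w y).trans
      (mul_le_mul_of_nonneg_left h1 (mul_pos hσ2 hgC).le)
    exact mul_le_mul h2 (hK y hy) (norm_nonneg _)
      (mul_nonneg (mul_pos hσ2 hgC).le (by positivity))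
  · exact integrable_const _
  · filter_upwards with y w _
    exact (hasFDerivAt_gauss hσ y w).smul_const (φ y)

/-- The mean-type vector integral `∫ g_{σ²}(w−y) y dp(y)`. -/
def mvec (d : ℕ) (σ : ℝ) (p : Measure (Eu d)) (w : Eu d) : Eu d :=
  ∫ y, gaussDensity d σ (w - y) • y ∂p

variable {ρ : ℝ} {p : Measure (Eu d)} [IsProbabilityMeasure p]

omit [IsProbabilityMeasure p] in
lemma smoothed_eq :
    smoothedDensity d σ p = fun w => ∫ y, gaussDensity d σ (w - y) • (1:ℝ) ∂p := by
  funext w; simp [smoothedDensity]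

lemma gauss_integrable (hσ : σ ≠ 0) (hae : ∀ᵐ y ∂p, ‖y‖ ≤ ρ) (x : Eu d) :
    Integrable (fun y => gaussDensity d σ (x - y)) p := by
  have h := (key hσ hae x (fun _ => (1:ℝ)) continuous_const 1 (fun y _ => by simp)).1
  simpa using h

lemma P_pos (hσ : σ ≠ 0) (hρ : 0 ≤ ρ) (hae : ∀ᵐ y ∂p, ‖y‖ ≤ ρ) (x : Eu d) :
    0 < smoothedDensity d σ p x := by
  have hc : 0 < gC d σ * Real.exp (-(‖x‖ + ρ) ^ 2 / (2 * σ ^ 2)) :=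
    mul_pos (gC_pos hσ) (Real.exp_pos _)
  refine lt_of_lt_of_le hc ?_
  have hint := gauss_integrable hσ hae x
  have hmono : (fun _ : Eu d => gC d σ * Real.exp (-(‖x‖ + ρ) ^ 2 / (2 * σ ^ 2)))
      ≤ᵐ[p] fun y => gaussDensity d σ (x - y) := by
    filter_upwards [hae] with y hy
    unfold gaussDensity gC
    gcongr
    exact (norm_sub_le x y).trans (by linarith)
  have := integral_mono_ae (integrable_const _) hint hmono
  simpa [smoothedDensity] using this

lemma mvec_inner (hσ : σ ≠ 0) (hae : ∀ᵐ y ∂p, ‖y‖ ≤ ρ) (w u : Eu d) :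
    ⟪mvec d σ p w, u⟫ = ∫ y, gaussDensity d σ (w - y) * ⟪y, u⟫ ∂p := by
  obtain ⟨hint2, -, -⟩ := key hσ hae w (fun y => y) continuous_id ρ (fun y hy => hy)
  rw [real_inner_comm, mvec, ← integral_inner hint2]
  congr 1; funext y
  rw [real_inner_smul_right, real_inner_comm]

lemma L_apply (hσ : σ ≠ 0) (hae : ∀ᵐ y ∂p, ‖y‖ ≤ ρ) (w u : Eu d) :
    (∫ y, (Dg d σ w y).smulRight (1:ℝ) ∂p) u
      = -(σ^2)⁻¹ * (⟪w,u⟫ * smoothedDensity d σ p w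
          - ∫ y, gaussDensity d σ (w - y) * ⟪y, u⟫ ∂p) := by
  obtain ⟨hint1, hint1', -⟩ :=
    key hσ hae w (fun _ => (1:ℝ)) continuous_const 1 (fun y _ => by simp)
  obtain ⟨hint3, -, -⟩ := key hσ hae w (fun y => ⟪y, u⟫) (continuous_id.inner continuous_const)
    (ρ * ‖u‖) (fun y hy => (abs_real_inner_le_norm y u).trans (by gcongr))
  have hBint : Integrable (fun y => gaussDensity d σ (w - y) * ⟪y, u⟫) p := by
    simpa [smul_eq_mul] using hint3
  have hgint : Integrable (fun y => gaussDensity d σ (w - y)) p := by simpa using hint1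
  rw [ContinuousLinearMap.integral_apply hint1']
  have hy : ∀ y : Eu d, ((Dg d σ w y).smulRight (1:ℝ)) u
      = (-(σ^2)⁻¹ * ⟪w,u⟫) * gaussDensity d σ (w - y)
        - (-(σ^2)⁻¹) * (gaussDensity d σ (w - y) * ⟪y,u⟫) := by
    intro y
    rw [ContinuousLinearMap.smulRight_apply, smul_eq_mul, mul_one, Dg_apply, inner_sub_left]
    ring
  rw [integral_congr_ae (Filter.Eventually.of_forall hy),
      integral_sub (hgint.const_mul _) (hBint.const_mul _),
      integral_const_mul, integral_const_mul]
  unfold smoothedDensity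
  ring

/-- Identification of the gradient of the log of the smoothed density. -/
lemma grad_log_eq (hσ : σ ≠ 0) (hρ : 0 ≤ ρ) (hae : ∀ᵐ y ∂p, ‖y‖ ≤ ρ) :
    (fun z => gradient (fun w => Real.log (smoothedDensity d σ p w)) z)
      = fun w => (σ ^ 2)⁻¹ • ((smoothedDensity d σ p w)⁻¹ • mvec d σ p w - w) := by
  funext w
  obtain ⟨hint1, hint1', hP0⟩ :=
    key hσ hae w (fun _ => (1:ℝ)) continuous_const 1 (fun y _ => by simp)
  have hPw : HasFDerivAt (smoothedDensity d σ p)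
      (∫ y, (Dg d σ w y).smulRight (1:ℝ) ∂p) w := by
    rw [smoothed_eq]; exact hP0
  have hPpos := P_pos hσ hρ hae w
  have hlog := hPw.log hPpos.ne'
  rw [hlog.hasGradientAt.gradient]
  apply (InnerProductSpace.toDual ℝ (EuclideanSpace ℝ (Fin d))).injective
  rw [LinearIsometryEquiv.apply_symm_apply]
  symm
  refine ContinuousLinearMap.ext fun u => ?_
  simp only [ContinuousLinearMap.smul_apply, smul_eq_mul, L_apply hσ hae w u,
    InnerProductSpace.toDual_apply_apply, real_inner_smul_left, inner_sub_left,
    mvec_inner hσ hae w u]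
  field_simp
  ring

end Stmt0Aux

open Stmt0Aux in
/-- For a probability measure `p` supported in the closed ball of radius `ρ` in `ℝ^d`,
the Hessian of `log p_{σ²}` at every point `x` equals `(1/σ⁴)(Σ_x − σ² I)`, where `Σ_x`
is the covariance matrix of the tilted probability measure `q_x`. -/
theorem stmt_0 (d : ℕ) (ρ σ : ℝ) (hρ : 0 < ρ) (hσ : 0 < σ)
    (p : Measure (EuclideanSpace ℝ (Fin d))) [IsProbabilityMeasure p]
    (hsupp : p (Metric.closedBall (0 : EuclideanSpace ℝ (Fin d)) ρ)ᶜ = 0) :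
    ∀ x u v : EuclideanSpace ℝ (Fin d),
      ⟪fderiv ℝ (fun z => gradient (fun w => Real.log (smoothedDensity d σ p w)) z) x u,
          v⟫ =
        (1 / σ ^ 4) * (tiltedCov d σ p x u v - σ ^ 2 * ⟪u, v⟫) := by
  intro x u v
  have hae : ∀ᵐ y ∂p, ‖y‖ ≤ ρ := by
    rw [ae_iff]
    convert hsupp using 2
    ext y
    simp [Metric.mem_closedBall, dist_zero_right, not_le]
  rw [grad_log_eq hσ.ne' hρ.le hae]
  obtain ⟨hint1, hint1', hP0⟩ :=
    key hσ.ne' hae x (fun _ => (1:ℝ)) continuous_const 1 (fun y _ => by simp)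
  obtain ⟨hint2, hint2', hm⟩ := key hσ.ne' hae x (fun y => y) continuous_id ρ (fun y hy => hy)
  obtain ⟨hint3u, -, -⟩ := key hσ.ne' hae x (fun y => ⟪y, u⟫)
    (continuous_id.inner continuous_const)
    (ρ * ‖u‖) (fun y hy => (abs_real_inner_le_norm y u).trans (by gcongr))
  obtain ⟨hint3v, -, -⟩ := key hσ.ne' hae x (fun y => ⟪y, v⟫)
    (continuous_id.inner continuous_const)
    (ρ * ‖v‖) (fun y hy => (abs_real_inner_le_norm y v).trans (by gcongr))
  obtain ⟨hint4, -, -⟩ := key hσ.ne' hae x (fun y => ⟪y, u⟫ * ⟪y, v⟫)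
    ((continuous_id.inner continuous_const).mul (continuous_id.inner continuous_const))
    ((ρ * ‖u‖) * (ρ * ‖v‖)) (fun y hy => by
      rw [norm_mul]
      exact mul_le_mul ((abs_real_inner_le_norm y u).trans (by gcongr))
        ((abs_real_inner_le_norm y v).trans (by gcongr)) (abs_nonneg _)
        (by positivity))
  have hBuint : Integrable (fun y => gaussDensity d σ (x - y) * ⟪y, u⟫) p := by
    simpa [smul_eq_mul] using hint3u
  have hBvint : Integrable (fun y => gaussDensity d σ (x - y) * ⟪y, v⟫) p := by
    simpa [smul_eq_mul] using hint3v
  have hAint : Integrable (fun y => gaussDensity d σ (x - y) * (⟪y, u⟫ * ⟪y, v⟫)) p := by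
    simpa [smul_eq_mul] using hint4
  have hPpos := P_pos hσ.ne' hρ.le hae x
  have hPw : HasFDerivAt (smoothedDensity d σ p)
      (∫ y, (Dg d σ x y).smulRight (1:ℝ) ∂p) x := by
    rw [smoothed_eq]; exact hP0
  have hinv : HasFDerivAt (fun w => (smoothedDensity d σ p w)⁻¹)
      ((-(smoothedDensity d σ p x ^ 2)⁻¹) • (∫ y, (Dg d σ x y).smulRight (1:ℝ) ∂p)) x :=
    (hasDerivAt_inv hPpos.ne').comp_hasFDerivAt x hPw
  have hmv : HasFDerivAt (mvec d σ p) (∫ y, (Dg d σ x y).smulRight y ∂p) x := by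
    unfold mvec; exact hm
  have hG := ((hinv.smul hmv).sub (hasFDerivAt_id x)).const_smul (R := ℝ) ((σ:ℝ)^2)⁻¹
  have hfd : fderiv ℝ
      (fun w => (σ ^ 2)⁻¹ • ((smoothedDensity d σ p w)⁻¹ • mvec d σ p w - w)) x
      = (σ ^ 2)⁻¹ • (((smoothedDensity d σ p x)⁻¹ • (∫ y, (Dg d σ x y).smulRight y ∂p)
          + ((-(smoothedDensity d σ p x ^ 2)⁻¹)
              • (∫ y, (Dg d σ x y).smulRight (1:ℝ) ∂p)).smulRight (mvec d σ p x))
          - ContinuousLinearMap.id ℝ (EuclideanSpace ℝ (Fin d))) :=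
    HasFDerivAt.fderiv (by exact hG)
  rw [hfd]
  -- inner ⟪Md u, v⟫
  have hMd : ⟪(∫ y, (Dg d σ x y).smulRight y ∂p) u, v⟫
      = -(σ^2)⁻¹ * (⟪x,u⟫ * (∫ y, gaussDensity d σ (x - y) * ⟪y, v⟫ ∂p)
          - ∫ y, gaussDensity d σ (x - y) * (⟪y, u⟫ * ⟪y, v⟫) ∂p) := by
    rw [ContinuousLinearMap.integral_apply hint2', real_inner_comm,
      ← integral_inner (hint2'.apply_continuousLinearMap u)]
    have hy : ∀ y : Eu d, ⟪v, ((Dg d σ x y).smulRight y) u⟫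
        = (-(σ^2)⁻¹ * ⟪x,u⟫) * (gaussDensity d σ (x - y) * ⟪y, v⟫)
          - (-(σ^2)⁻¹) * (gaussDensity d σ (x - y) * (⟪y, u⟫ * ⟪y, v⟫)) := by
      intro y
      rw [ContinuousLinearMap.smulRight_apply, real_inner_smul_right, Dg_apply,
        inner_sub_left, real_inner_comm v y]
      ring
    rw [integral_congr_ae (Filter.Eventually.of_forall hy),
        integral_sub (hBvint.const_mul _) (hAint.const_mul _),
        integral_const_mul, integral_const_mul]
    ring
  -- tiltedCov in terms of plain integrals
  have hgauss_div : ∀ f : Eu d → ℝ,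
      (∫ y, f y * (gaussDensity d σ (x - y) / smoothedDensity d σ p x) ∂p)
        = (∫ y, gaussDensity d σ (x - y) * f y ∂p) * (smoothedDensity d σ p x)⁻¹ := by
    intro f
    rw [← integral_mul_const]
    congr 1; funext y
    rw [div_eq_mul_inv]; ring
  have htc : tiltedCov d σ p x u v
      = (∫ y, gaussDensity d σ (x - y) * (⟪y, u⟫ * ⟪y, v⟫) ∂p) * (smoothedDensity d σ p x)⁻¹
        - ((∫ y, gaussDensity d σ (x - y) * ⟪y, u⟫ ∂p) * (smoothedDensity d σ p x)⁻¹)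
          * ((∫ y, gaussDensity d σ (x - y) * ⟪y, v⟫ ∂p) * (smoothedDensity d σ p x)⁻¹) := by
    rw [tiltedCov, hgauss_div, hgauss_div, hgauss_div]
  -- expand the applied continuous linear map and inner products
  simp only [ContinuousLinearMap.smul_apply, ContinuousLinearMap.sub_apply,
    ContinuousLinearMap.add_apply, ContinuousLinearMap.smulRight_apply,
    ContinuousLinearMap.coe_id', id_eq, smul_eq_mul, real_inner_smul_left,
    inner_sub_left, inner_add_left, hMd, mvec_inner hσ.ne' hae x v,
    L_apply hσ.ne' hae x u, htc]
  field_simp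
  ring

end
end

section
/- Let p be a probability measure supported in the closed ball of radius ρ in ℝ^d and p_{σ²} its Gaussian smoothing with variance σ². Then the map x ↦ ∇ log p_{σ²}(x) is Lipschitz with constant ρ²/σ⁴ if ρ² ≥ σ², and with constant 1/σ² otherwise. -/
open Set Filter MeasureTheory Real

set_option maxHeartbeats 2000000
set_option synthInstance.maxHeartbeats 1000000
set_option linter.unusedSectionVars false

noncomputable section

section Abstract

variable {E : Type*} [NormedAddCommGroup E] [InnerProductSpace ℝ E] [CompleteSpace E]

local notation "⟪" x ", " y "⟫" => @inner ℝ _ _ x y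

lemma aux_first_order {G : E → ℝ} (hG : ConvexOn ℝ Set.univ G) {g x y : E}
    (hg : HasGradientAt G g x) : G x + ⟪g, y - x⟫ ≤ G y := by
  rcases eq_or_ne y x with rfl | hne
  · simp
  · set ψ : ℝ → ℝ := fun t => G (x + t • (y - x)) with hψdef
    have hψconv : ConvexOn ℝ Set.univ ψ := by
      have h1 := hG.comp_affineMap (AffineMap.lineMap x y : ℝ →ᵃ[ℝ] E)
      have : (G ∘ (AffineMap.lineMap x y : ℝ →ᵃ[ℝ] E)) = ψ := by
        funext t
        simp [hψdef, AffineMap.lineMap_apply_module]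
        ring_nf
        congr 1
        module
      rw [this] at h1
      simpa using h1
    have hline : HasDerivAt (fun t : ℝ => x + t • (y - x)) (y - x) 0 := by
      simpa using ((hasDerivAt_id (0:ℝ)).smul_const (y - x)).const_add x
    have hder : HasDerivAt ψ ⟪g, y - x⟫ 0 := by
      have hfd := hasGradientAt_iff_hasFDerivAt.mp hg
      have h0 : x + (0:ℝ) • (y - x) = x := by simp
      rw [← h0] at hfd
      have hcomp := hfd.comp_hasDerivAt (x := (0:ℝ)) hline
      have : (InnerProductSpace.toDual ℝ E) g (y - x) = ⟪g, y - x⟫ :=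
        InnerProductSpace.toDual_apply_apply
      rw [this] at hcomp
      exact hcomp
    have hslope := hψconv.le_slope_of_hasDerivAt (mem_univ (0:ℝ)) (mem_univ (1:ℝ)) zero_lt_one hder
    rw [slope_def_field] at hslope
    have h0 : ψ 0 = G x := by simp [hψdef]
    have h1 : ψ 1 = G y := by simp [hψdef]
    rw [h0, h1] at hslope
    simp at hslope
    linarith

lemma aux_lipschitz {F : E → ℝ} {s : E → E} (hF : ∀ x, HasGradientAt F (s x) x)
    {α L : ℝ} (hα : α ≤ 0) (hL : 0 < L)
    (hconv : ConvexOn ℝ Set.univ (fun x => F x - α / 2 * ‖x‖ ^ 2))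
    (hsmooth : ConvexOn ℝ Set.univ (fun x => (L + α) / 2 * ‖x‖ ^ 2 - F x)) :
    ∀ x y : E, ‖s x - s y‖ ≤ max (-α) (L + α) * ‖x - y‖ := by
  set G : E → ℝ := fun x => F x - α / 2 * ‖x‖ ^ 2 with hGdef
  set sG : E → E := fun x => s x - α • x with hsGdef
  -- gradient of ‖·‖²
  have hnsq : ∀ x : E, HasFDerivAt (fun y : E => ‖y‖ ^ 2) (2 • (innerSL ℝ x)) x :=
    fun x => (hasStrictFDerivAt_norm_sq x).hasFDerivAt
  have hG : ∀ x, HasGradientAt G (sG x) x := by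
    intro x
    rw [hasGradientAt_iff_hasFDerivAt]
    have h1 := hasGradientAt_iff_hasFDerivAt.mp (hF x)
    have h2 : HasFDerivAt (fun y : E => α / 2 * ‖y‖ ^ 2) ((α / 2) • (2 • (innerSL ℝ x))) x :=
      (hnsq x).const_mul (α / 2)
    have h3 := h1.sub h2
    refine h3.congr_fderiv ?_
    ext v
    simp [hsGdef, InnerProductSpace.toDual_apply_apply, inner_sub_left, real_inner_smul_left,
      two_smul]
    ring
  -- gradient of K := L/2 ‖·‖² - G
  have hKeq : (fun x : E => (L + α) / 2 * ‖x‖ ^ 2 - F x) = (fun x => L / 2 * ‖x‖ ^ 2 - G x) := by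
    funext z; simp [hGdef]; ring
  have hK : ConvexOn ℝ Set.univ (fun x => L / 2 * ‖x‖ ^ 2 - G x) := hKeq ▸ hsmooth
  have hKgrad : ∀ x, HasGradientAt (fun x => L / 2 * ‖x‖ ^ 2 - G x) (L • x - sG x) x := by
    intro x
    rw [hasGradientAt_iff_hasFDerivAt]
    have h2 : HasFDerivAt (fun y : E => L / 2 * ‖y‖ ^ 2) ((L / 2) • (2 • (innerSL ℝ x))) x :=
      (hnsq x).const_mul (L / 2)
    have h3 := h2.sub (hasGradientAt_iff_hasFDerivAt.mp (hG x))
    refine h3.congr_fderiv ?_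
    ext v
    simp [InnerProductSpace.toDual_apply_apply, inner_sub_left, real_inner_smul_left, two_smul]
    ring
  have hsGx : ∀ x : E, sG x = s x - α • x := fun _ => rfl
  clear_value G sG
  -- first order inequalities
  have A1 : ∀ x y : E, G x + ⟪sG x, y - x⟫ ≤ G y := fun x y => aux_first_order hconv (hG x)
  have A2 : ∀ x y : E, G y ≤ G x + ⟪sG x, y - x⟫ + L / 2 * ‖y - x‖ ^ 2 := by
    intro x y
    have := aux_first_order hK (hKgrad x) (y := y)
    have hid : ‖y - x‖ ^ 2 = ‖y‖ ^ 2 - 2 * ⟪x, y⟫ + ‖x‖ ^ 2 := by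
      rw [norm_sub_sq_real]; ring_nf; rw [real_inner_comm]; ring
    have hinner : ⟪L • x - sG x, y - x⟫
        = L * ⟪x, y⟫ - L * ‖x‖ ^ 2 - ⟪sG x, y - x⟫ := by
      rw [inner_sub_left, real_inner_smul_left, inner_sub_right, real_inner_self_eq_norm_sq]
      ring
    rw [hinner] at this
    nlinarith [this]
  have A3 : ∀ x y : E, G x + ⟪sG x, y - x⟫ + 1 / (2 * L) * ‖sG y - sG x‖ ^ 2 ≤ G y := by
    intro x y
    set Δ : E := sG y - sG x with hΔ
    set z : E := y - (1 / L) • Δ with hz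
    have e1 := A1 x z
    have e2 := A2 y z
    have hzx : ⟪sG x, z - x⟫ = ⟪sG x, y - x⟫ - (1 / L) * ⟪sG x, Δ⟫ := by
      have : z - x = (y - x) - (1 / L) • Δ := by rw [hz]; abel
      rw [this, inner_sub_right, real_inner_smul_right]
    have hzy : z - y = -((1 / L) • Δ) := by rw [hz]; abel
    have hzy2 : ⟪sG y, z - y⟫ = -(1 / L) * ⟪sG y, Δ⟫ := by
      rw [hzy, inner_neg_right, real_inner_smul_right]; ring
    have hzn : ‖z - y‖ ^ 2 = (1 / L) ^ 2 * ‖Δ‖ ^ 2 := by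
      rw [hzy, norm_neg, norm_smul]
      simp [mul_pow, sq_abs]
    have hDelta : ⟪sG y, Δ⟫ - ⟪sG x, Δ⟫ = ‖Δ‖ ^ 2 := by
      rw [← inner_sub_left, ← hΔ, real_inner_self_eq_norm_sq]
    rw [hzx] at e1
    rw [hzy2, hzn] at e2
    have hL' : (0:ℝ) < 2 * L := by linarith
    have key : G x + ⟪sG x, y - x⟫ + (1 / L) * (⟪sG y, Δ⟫ - ⟪sG x, Δ⟫)
        - L / 2 * ((1 / L) ^ 2 * ‖Δ‖ ^ 2) ≤ G y := by linarith
    rw [hDelta] at key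
    have : (1 / L) * ‖Δ‖ ^ 2 - L / 2 * ((1 / L) ^ 2 * ‖Δ‖ ^ 2) = 1 / (2 * L) * ‖Δ‖ ^ 2 := by
      field_simp; ring
    linarith [key, this.symm.le]
  have A4 : ∀ x y : E, 1 / L * ‖sG x - sG y‖ ^ 2 ≤ ⟪sG x - sG y, x - y⟫ := by
    intro x y
    have e1 := A3 x y
    have e2 := A3 y x
    have hnn : ‖sG x - sG y‖ = ‖sG y - sG x‖ := by rw [← norm_neg]; congr 1; abel
    have hi : ⟪sG x, y - x⟫ + ⟪sG y, x - y⟫ = -⟪sG x - sG y, x - y⟫ := by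
      have hyx : (y - x : E) = -(x - y) := by abel
      rw [hyx, inner_neg_right, inner_sub_left]
      ring
    have h2L : (0:ℝ) < 2 * L := by linarith
    have hq : 1 / (2 * L) * ‖sG y - sG x‖ ^ 2 + 1 / (2 * L) * ‖sG x - sG y‖ ^ 2
        = 1 / L * ‖sG x - sG y‖ ^ 2 := by
      rw [hnn]; field_simp; ring
    nlinarith [e1, e2, hi, hq]
  -- final computation
  intro x y
  set D : E := sG x - sG y with hD
  set w : E := x - y with hw
  set a : ℝ := ⟪D, w⟫ with ha
  have h1 : ‖D‖ ^ 2 ≤ L * a := by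
    have := A4 x y
    rw [← hD, ← hw, ← ha] at this
    have := mul_le_mul_of_nonneg_left this (le_of_lt hL)
    calc ‖D‖ ^ 2 = L * (1 / L * ‖D‖ ^ 2) := by field_simp
    _ ≤ L * a := this
  have h2 : a ≤ ‖D‖ * ‖w‖ := real_inner_le_norm D w
  have hsplit : s x - s y = D + α • w := by
    rw [hD, hw, hsGx, hsGx, smul_sub]
    abel
  have hnorm : ‖s x - s y‖ ^ 2 = ‖D‖ ^ 2 + 2 * α * a + α ^ 2 * ‖w‖ ^ 2 := by
    rw [hsplit, norm_add_sq_real, real_inner_smul_right, norm_smul]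
    simp [mul_pow, sq_abs, ha]
    ring
  set M : ℝ := max (-α) (L + α) with hM
  have hMα : -α ≤ M := le_max_left _ _
  have hM0 : 0 ≤ M := le_trans (by linarith) hMα
  have hgoal2 : ‖s x - s y‖ ^ 2 ≤ (M * ‖x - y‖) ^ 2 := by
    rw [hnorm, ← hw]
    rcases le_or_gt 0 (L + 2 * α) with hcase | hcase
    · -- ‖D‖ ≤ L ‖w‖
      have hDw : ‖D‖ ≤ L * ‖w‖ := by
        rcases eq_or_lt_of_le (norm_nonneg D) with hD0 | hD0
        · rw [← hD0]; positivity
        · nlinarith [h1, h2, mul_le_mul_of_nonneg_left h2 hL.le, mul_pos hD0 hD0]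
      have hML : L + α ≤ M := le_max_right _ _
      -- L * LHS ≤ L * (L+α)^2 ‖w‖^2
      have key : L * (‖D‖ ^ 2 + 2 * α * a + α ^ 2 * ‖w‖ ^ 2) ≤ L * ((L + α) ^ 2 * ‖w‖ ^ 2) := by
        have t1 : 2 * α * (L * a) ≤ 2 * α * ‖D‖ ^ 2 :=
          mul_le_mul_of_nonpos_left h1 (by linarith)
        have t2 : (L + 2 * α) * ‖D‖ ^ 2 ≤ (L + 2 * α) * (L * ‖w‖) ^ 2 := by
          apply mul_le_mul_of_nonneg_left _ hcase
          exact pow_le_pow_left₀ (norm_nonneg D) hDw 2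
        nlinarith [t1, t2]
      have hLHS := le_of_mul_le_mul_left (by linarith [key] : L * (‖D‖ ^ 2 + 2 * α * a + α ^ 2 * ‖w‖ ^ 2) ≤ L * ((L + α) ^ 2 * ‖w‖ ^ 2)) hL
      calc ‖D‖ ^ 2 + 2 * α * a + α ^ 2 * ‖w‖ ^ 2 ≤ (L + α) ^ 2 * ‖w‖ ^ 2 := hLHS
      _ ≤ (M * ‖w‖) ^ 2 := by
        rw [mul_pow]
        apply mul_le_mul_of_nonneg_right _ (sq_nonneg _)
        apply sq_le_sq'
        · nlinarith [hML, hM0, hcase]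
        · exact hML
    · -- (L + 2α) < 0 : LHS ≤ α² ‖w‖²
      have key : L * (‖D‖ ^ 2 + 2 * α * a + α ^ 2 * ‖w‖ ^ 2) ≤ L * (α ^ 2 * ‖w‖ ^ 2) := by
        have t1 : 2 * α * (L * a) ≤ 2 * α * ‖D‖ ^ 2 :=
          mul_le_mul_of_nonpos_left h1 (by linarith)
        have t2 : (L + 2 * α) * ‖D‖ ^ 2 ≤ 0 :=
          mul_nonpos_of_nonpos_of_nonneg (le_of_lt hcase) (sq_nonneg _)
        nlinarith [t1, t2]
      have hLHS := le_of_mul_le_mul_left (by linarith [key] : L * (‖D‖ ^ 2 + 2 * α * a + α ^ 2 * ‖w‖ ^ 2) ≤ L * (α ^ 2 * ‖w‖ ^ 2)) hL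
      calc ‖D‖ ^ 2 + 2 * α * a + α ^ 2 * ‖w‖ ^ 2 ≤ α ^ 2 * ‖w‖ ^ 2 := hLHS
      _ ≤ (M * ‖w‖) ^ 2 := by
        rw [mul_pow]
        apply mul_le_mul_of_nonneg_right _ (sq_nonneg _)
        apply sq_le_sq'
        · linarith [hMα]
        · linarith [hMα, neg_le_self (le_of_lt hL)]  -- α ≤ -α ≤ M? need α ≤ M
  have hfin : ‖s x - s y‖ ≤ M * ‖x - y‖ := by
    nlinarith [hgoal2, norm_nonneg (s x - s y), mul_nonneg hM0 (norm_nonneg (x - y))]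
  exact hfin

end Abstract

section OneDim

variable {Y : Type*} [MeasurableSpace Y] {ν : Measure Y} [IsProbabilityMeasure ν]

lemma expint_integrable {a : Y → ℝ} {A : ℝ} (ha : AEStronglyMeasurable a ν)
    (haA : ∀ᵐ y ∂ν, |a y| ≤ A) : Integrable (fun y => Real.exp (a y)) ν := by
  refine Integrable.mono' (integrable_const (Real.exp A))
    (Real.continuous_exp.comp_aestronglyMeasurable ha) ?_
  filter_upwards [haA] with y hy
  rw [Real.norm_eq_abs, abs_of_pos (Real.exp_pos _)]
  exact Real.exp_le_exp.mpr (le_trans (le_abs_self _) hy)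

lemma expint_pos {a : Y → ℝ} {A : ℝ} (ha : AEStronglyMeasurable a ν)
    (haA : ∀ᵐ y ∂ν, |a y| ≤ A) : 0 < ∫ y, Real.exp (a y) ∂ν := by
  have h1 : ∫ y, Real.exp (-A) ∂ν ≤ ∫ y, Real.exp (a y) ∂ν := by
    apply integral_mono_ae (integrable_const _) (expint_integrable ha haA)
    filter_upwards [haA] with y hy
    exact Real.exp_le_exp.mpr (by rcases abs_le.mp hy with ⟨h, _⟩; linarith)
  calc (0:ℝ) < Real.exp (-A) := Real.exp_pos _
  _ = ∫ _, Real.exp (-A) ∂ν := by simp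
  _ ≤ _ := h1

lemma tilt_meas {a b : Y → ℝ} (ha : AEStronglyMeasurable a ν) (hb : AEStronglyMeasurable b ν)
    (n : ℕ) (t : ℝ) :
    AEStronglyMeasurable (fun y => (b y) ^ n * Real.exp (a y + t * b y)) ν := by
  exact (hb.pow n).mul
    (Real.continuous_exp.comp_aestronglyMeasurable (ha.add (hb.const_mul t)))

lemma tilt_bound {a b : Y → ℝ} {A R : ℝ} (hR : 0 ≤ R)
    (haA : ∀ᵐ y ∂ν, |a y| ≤ A) (hbR : ∀ᵐ y ∂ν, |b y| ≤ R) (n : ℕ) (t : ℝ) :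
    ∀ᵐ y ∂ν, ∀ s ∈ Metric.ball t 1,
      ‖(b y) ^ n * Real.exp (a y + s * b y)‖ ≤ R ^ n * Real.exp (A + (|t| + 1) * R) := by
  filter_upwards [haA, hbR] with y hyA hyR
  intro s hs
  have hsabs : |s| ≤ |t| + 1 := by
    have := abs_sub_abs_le_abs_sub s t
    have h2 : |s - t| < 1 := by simpa [Real.dist_eq] using hs
    linarith
  have hb0 : 0 ≤ |b y| := abs_nonneg _
  have hexp : Real.exp (a y + s * b y) ≤ Real.exp (A + (|t| + 1) * R) := by
    apply Real.exp_le_exp.mpr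
    have h1 : a y ≤ A := le_trans (le_abs_self _) hyA
    have h2 : s * b y ≤ (|t| + 1) * R := by
      calc s * b y ≤ |s * b y| := le_abs_self _
      _ = |s| * |b y| := abs_mul s (b y)
      _ ≤ (|t| + 1) * R := by
        apply mul_le_mul hsabs hyR hb0 (by positivity)
    linarith
  calc ‖(b y) ^ n * Real.exp (a y + s * b y)‖
      = |b y| ^ n * Real.exp (a y + s * b y) := by
        rw [Real.norm_eq_abs, abs_mul, abs_pow, abs_of_pos (Real.exp_pos _)]
  _ ≤ R ^ n * Real.exp (A + (|t| + 1) * R) := by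
      apply mul_le_mul (pow_le_pow_left₀ hb0 hyR n) hexp (le_of_lt (Real.exp_pos _))
        (by positivity)

lemma tilt_integrable {a b : Y → ℝ} {A R : ℝ} (hR : 0 ≤ R)
    (ha : AEStronglyMeasurable a ν) (hb : AEStronglyMeasurable b ν)
    (haA : ∀ᵐ y ∂ν, |a y| ≤ A) (hbR : ∀ᵐ y ∂ν, |b y| ≤ R) (n : ℕ) (t : ℝ) :
    Integrable (fun y => (b y) ^ n * Real.exp (a y + t * b y)) ν := by
  refine Integrable.mono' (integrable_const (R ^ n * Real.exp (A + (|t| + 1) * R)))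
    (tilt_meas ha hb n t) ?_
  filter_upwards [tilt_bound hR haA hbR n t] with y hy
  exact hy t (Metric.mem_ball_self one_pos)

lemma tilt_hasDerivAt {a b : Y → ℝ} {A R : ℝ} (hR : 0 ≤ R)
    (ha : AEStronglyMeasurable a ν) (hb : AEStronglyMeasurable b ν)
    (haA : ∀ᵐ y ∂ν, |a y| ≤ A) (hbR : ∀ᵐ y ∂ν, |b y| ≤ R) (n : ℕ) (t : ℝ) :
    HasDerivAt (fun s => ∫ y, (b y) ^ n * Real.exp (a y + s * b y) ∂ν)
      (∫ y, (b y) ^ (n + 1) * Real.exp (a y + t * b y) ∂ν) t := by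
  have main := hasDerivAt_integral_of_dominated_loc_of_deriv_le (μ := ν)
    (F := fun s y => (b y) ^ n * Real.exp (a y + s * b y))
    (F' := fun s y => (b y) ^ (n + 1) * Real.exp (a y + s * b y))
    (bound := fun _ => R ^ (n + 1) * Real.exp (A + (|t| + 1) * R))
    (Metric.ball_mem_nhds t one_pos)
    (Eventually.of_forall (fun s => tilt_meas ha hb n s))
    (tilt_integrable hR ha hb haA hbR n t)
    (tilt_meas ha hb (n + 1) t)
    (tilt_bound hR haA hbR (n + 1) t)
    (integrable_const _)
    ?_
  · exact main.2
  · filter_upwards with y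
    intro s _
    have hd : HasDerivAt (fun u : ℝ => a y + u * b y) (b y) s := by
      simpa using (hasDerivAt_mul_const (b y)).const_add (a y)
    have he := hd.exp
    have := he.const_mul ((b y) ^ n)
    exact this.congr_deriv (by ring)

lemma tilt_cauchy_schwarz {a b : Y → ℝ} {A R : ℝ} (hR : 0 ≤ R)
    (ha : AEStronglyMeasurable a ν) (hb : AEStronglyMeasurable b ν)
    (haA : ∀ᵐ y ∂ν, |a y| ≤ A) (hbR : ∀ᵐ y ∂ν, |b y| ≤ R) (t : ℝ) :
    (∫ y, (b y) ^ 1 * Real.exp (a y + t * b y) ∂ν) ^ 2 ≤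
      (∫ y, (b y) ^ 2 * Real.exp (a y + t * b y) ∂ν) *
      (∫ y, (b y) ^ 0 * Real.exp (a y + t * b y) ∂ν) := by
  set f : Y → ℝ := fun y => |b y| * Real.exp ((a y + t * b y) / 2) with hf
  set g : Y → ℝ := fun y => Real.exp ((a y + t * b y) / 2) with hg
  have hmeas2 : AEStronglyMeasurable (fun y => (a y + t * b y) / 2) ν := by
    simpa [div_eq_inv_mul] using (ha.add (hb.const_mul t)).const_mul ((2:ℝ)⁻¹)
  have habsb : AEStronglyMeasurable (fun y => |b y|) ν := by
    simpa [Real.norm_eq_abs] using hb.norm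
  have hfmeas : AEStronglyMeasurable f ν :=
    habsb.mul (Real.continuous_exp.comp_aestronglyMeasurable hmeas2)
  have hgmeas : AEStronglyMeasurable g ν :=
    Real.continuous_exp.comp_aestronglyMeasurable hmeas2
  have hC : ∀ᵐ y ∂ν, (a y + t * b y) / 2 ≤ (A + |t| * R) / 2 := by
    filter_upwards [haA, hbR] with y h1 h2
    have : t * b y ≤ |t| * R := by
      calc t * b y ≤ |t * b y| := le_abs_self _
      _ = |t| * |b y| := abs_mul _ _
      _ ≤ |t| * R := by apply mul_le_mul_of_nonneg_left h2 (abs_nonneg t)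
    have := le_trans (le_abs_self _) h1
    linarith
  have hfbd : MemLp f (ENNReal.ofReal 2) ν := by
    apply MemLp.of_bound hfmeas (R * Real.exp ((A + |t| * R) / 2))
    filter_upwards [hbR, hC] with y h1 h2
    show ‖|b y| * Real.exp ((a y + t * b y) / 2)‖ ≤ _
    rw [Real.norm_eq_abs, abs_mul, abs_abs, abs_of_pos (Real.exp_pos _)]
    exact mul_le_mul h1 (Real.exp_le_exp.mpr h2) (le_of_lt (Real.exp_pos _)) hR
  have hgbd : MemLp g (ENNReal.ofReal 2) ν := by
    apply MemLp.of_bound hgmeas (Real.exp ((A + |t| * R) / 2))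
    filter_upwards [hC] with y h2
    show ‖Real.exp ((a y + t * b y) / 2)‖ ≤ _
    rw [Real.norm_eq_abs, abs_of_pos (Real.exp_pos _)]
    exact Real.exp_le_exp.mpr h2
  have hpq : Real.HolderConjugate 2 2 := Real.HolderConjugate.two_two
  have holder := MeasureTheory.integral_mul_le_Lp_mul_Lq_of_nonneg hpq
    (Eventually.of_forall (fun y => by positivity : ∀ y, 0 ≤ f y))
    (Eventually.of_forall (fun y => le_of_lt (Real.exp_pos _) : ∀ y, 0 ≤ g y))
    hfbd hgbd
  -- identify pieces
  have hfg : ∀ y, f y * g y = |b y| * Real.exp (a y + t * b y) := by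
    intro y
    show |b y| * Real.exp ((a y + t * b y) / 2) * Real.exp ((a y + t * b y) / 2) = _
    rw [mul_assoc, ← Real.exp_add]
    congr 2
    ring
  have hf2 : ∀ y, f y ^ (2:ℝ) = (b y) ^ 2 * Real.exp (a y + t * b y) := by
    intro y
    show (|b y| * Real.exp ((a y + t * b y) / 2)) ^ (2:ℝ) = _
    rw [show (2:ℝ) = ((2:ℕ):ℝ) by norm_num, Real.rpow_natCast]
    rw [mul_pow, sq_abs, ← Real.exp_nat_mul]
    congr 2
    push_cast
    ring
  have hg2 : ∀ y, g y ^ (2:ℝ) = (b y) ^ 0 * Real.exp (a y + t * b y) := by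
    intro y
    show (Real.exp ((a y + t * b y) / 2)) ^ (2:ℝ) = _
    rw [show (2:ℝ) = ((2:ℕ):ℝ) by norm_num, Real.rpow_natCast, ← Real.exp_nat_mul]
    rw [pow_zero, one_mul]
    congr 1
    push_cast
    ring
  rw [integral_congr_ae (Eventually.of_forall hfg)] at holder
  rw [integral_congr_ae (Eventually.of_forall hf2)] at holder
  rw [integral_congr_ae (Eventually.of_forall hg2)] at holder
  -- now : ∫ |b| e ≤ (∫ b² e)^(1/2) * (∫ e)^(1/2)
  set X : ℝ := ∫ y, (b y) ^ 2 * Real.exp (a y + t * b y) ∂ν with hX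
  set Z : ℝ := ∫ y, (b y) ^ 0 * Real.exp (a y + t * b y) ∂ν with hZ
  have hXnn : 0 ≤ X := by
    rw [hX]; apply integral_nonneg; intro y; positivity
  have hZnn : 0 ≤ Z := by
    rw [hZ]; apply integral_nonneg; intro y; positivity
  have habs : |∫ y, (b y) ^ 1 * Real.exp (a y + t * b y) ∂ν|
      ≤ ∫ y, |b y| * Real.exp (a y + t * b y) ∂ν := by
    calc |∫ y, (b y) ^ 1 * Real.exp (a y + t * b y) ∂ν|
        = ‖∫ y, (b y) ^ 1 * Real.exp (a y + t * b y) ∂ν‖ := (Real.norm_eq_abs _).symm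
    _ ≤ ∫ y, ‖(b y) ^ 1 * Real.exp (a y + t * b y)‖ ∂ν := norm_integral_le_integral_norm _
    _ = ∫ y, |b y| * Real.exp (a y + t * b y) ∂ν := by
        congr 1; funext y
        rw [Real.norm_eq_abs, abs_mul, pow_one, abs_of_pos (Real.exp_pos _)]
  have hrhs : (X ^ ((1:ℝ)/2) * Z ^ ((1:ℝ)/2)) ^ 2 = X * Z := by
    rw [mul_pow, ← Real.rpow_natCast (X ^ ((1:ℝ)/2)) 2, ← Real.rpow_natCast (Z ^ ((1:ℝ)/2)) 2,
      ← Real.rpow_mul hXnn, ← Real.rpow_mul hZnn]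
    norm_num
  have hcomb : |∫ y, (b y) ^ 1 * Real.exp (a y + t * b y) ∂ν| ≤ X ^ ((1:ℝ)/2) * Z ^ ((1:ℝ)/2) :=
    le_trans habs holder
  calc (∫ y, (b y) ^ 1 * Real.exp (a y + t * b y) ∂ν) ^ 2
      = |∫ y, (b y) ^ 1 * Real.exp (a y + t * b y) ∂ν| ^ 2 := (sq_abs _).symm
  _ ≤ (X ^ ((1:ℝ)/2) * Z ^ ((1:ℝ)/2)) ^ 2 := by
      apply pow_le_pow_left₀ (abs_nonneg _) hcomb
  _ = X * Z := hrhs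

lemma tilt_log_deriv2 {a b : Y → ℝ} {A R : ℝ} (hR : 0 ≤ R)
    (ha : AEStronglyMeasurable a ν) (hb : AEStronglyMeasurable b ν)
    (haA : ∀ᵐ y ∂ν, |a y| ≤ A) (hbR : ∀ᵐ y ∂ν, |b y| ≤ R) :
    ∃ g g' : ℝ → ℝ,
      (∀ t, HasDerivAt (fun u => Real.log (∫ y, Real.exp (a y + u * b y) ∂ν)) (g t) t) ∧
      (∀ t, HasDerivAt g (g' t) t) ∧ (∀ t, 0 ≤ g' t ∧ g' t ≤ R ^ 2) := by
  set H : ℕ → ℝ → ℝ := fun n t => ∫ y, (b y) ^ n * Real.exp (a y + t * b y) ∂ν with hH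
  have hpos : ∀ t, 0 < H 0 t := by
    intro t
    have h0 : (fun y => (b y) ^ 0 * Real.exp (a y + t * b y)) =
        (fun y => Real.exp (a y + t * b y)) := by funext y; simp
    have : 0 < ∫ y, Real.exp (a y + t * b y) ∂ν := by
      apply expint_pos (ha.add (hb.const_mul t))
      filter_upwards [haA, hbR] with y h1 h2
      calc |a y + t * b y| ≤ |a y| + |t * b y| := abs_add_le _ _
      _ ≤ A + |t| * R := by
          rw [abs_mul]
          exact add_le_add h1 (mul_le_mul_of_nonneg_left h2 (abs_nonneg t))
    simpa [hH, h0] using this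
  have hd0 : ∀ t, HasDerivAt (H 0) (H 1 t) t := fun t => tilt_hasDerivAt hR ha hb haA hbR 0 t
  have hd1 : ∀ t, HasDerivAt (H 1) (H 2 t) t := fun t => tilt_hasDerivAt hR ha hb haA hbR 1 t
  refine ⟨fun t => H 1 t / H 0 t,
         fun t => (H 2 t * H 0 t - H 1 t * H 1 t) / (H 0 t) ^ 2, ?_, ?_, ?_⟩
  · intro t
    have hlog := (hd0 t).log (ne_of_gt (hpos t))
    have hfun : (fun u => Real.log (∫ y, Real.exp (a y + u * b y) ∂ν)) =
        (fun u => Real.log (H 0 u)) := by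
      funext u
      congr 1
      rw [hH]
      congr 1
      funext y
      simp
    rw [hfun]
    exact hlog
  · intro t
    exact (hd1 t).div (hd0 t) (ne_of_gt (hpos t))
  · intro t
    have hCS := tilt_cauchy_schwarz hR ha hb haA hbR t
    have hH2le : H 2 t ≤ R ^ 2 * H 0 t := by
      have : ∫ y, (b y) ^ 2 * Real.exp (a y + t * b y) ∂ν ≤
          ∫ y, R ^ 2 * ((b y) ^ 0 * Real.exp (a y + t * b y)) ∂ν := by
        apply integral_mono_ae (tilt_integrable hR ha hb haA hbR 2 t)
          ((tilt_integrable hR ha hb haA hbR 0 t).const_mul _)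
        filter_upwards [hbR] with y hy
        have : (b y) ^ 2 ≤ R ^ 2 := by
          rw [← sq_abs]
          exact pow_le_pow_left₀ (abs_nonneg _) hy 2
        calc (b y) ^ 2 * Real.exp (a y + t * b y) ≤ R ^ 2 * Real.exp (a y + t * b y) :=
              mul_le_mul_of_nonneg_right this (le_of_lt (Real.exp_pos _))
        _ = R ^ 2 * ((b y) ^ 0 * Real.exp (a y + t * b y)) := by simp
      calc H 2 t ≤ ∫ y, R ^ 2 * ((b y) ^ 0 * Real.exp (a y + t * b y)) ∂ν := this
      _ = R ^ 2 * H 0 t := MeasureTheory.integral_const_mul _ _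
    constructor
    · apply div_nonneg _ (sq_nonneg _)
      nlinarith [hCS]
    · rw [div_le_iff₀ (pow_pos (hpos t) 2)]
      have h1 : H 2 t * H 0 t ≤ R ^ 2 * H 0 t * H 0 t :=
        mul_le_mul_of_nonneg_right hH2le (le_of_lt (hpos t))
      nlinarith [sq_nonneg (H 1 t), h1]

end OneDim

section Helpers
variable {E : Type*} [NormedAddCommGroup E] [InnerProductSpace ℝ E]

lemma line_convexOn {G : E → ℝ}
    (h : ∀ x u : E, ConvexOn ℝ Set.univ (fun t : ℝ => G (x + t • u))) :
    ConvexOn ℝ Set.univ G := by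
  refine ⟨convex_univ, fun x _ y _ pp q hp hq hpq => ?_⟩
  have hc := (h x (y - x)).2 (mem_univ (0:ℝ)) (mem_univ (1:ℝ)) hp hq hpq
  simp only [smul_eq_mul, mul_zero, mul_one, zero_add] at hc
  have e0 : x + (0:ℝ) • (y - x) = x := by simp
  have e1 : x + (1:ℝ) • (y - x) = y := by simp
  have e2 : x + q • (y - x) = pp • x + q • y := by
    have hp' : pp = 1 - q := by linarith
    rw [hp']
    module
  rw [e0, e1, e2] at hc
  exact hc

lemma convexOn_univ_of_deriv2' {φ g g' : ℝ → ℝ}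
    (h1 : ∀ t, HasDerivAt φ (g t) t) (h2 : ∀ t, HasDerivAt g (g' t) t)
    (h3 : ∀ t, 0 ≤ g' t) : ConvexOn ℝ Set.univ φ := by
  apply convexOn_of_hasDerivWithinAt2_nonneg convex_univ (f' := g) (f'' := g')
  · exact (Differentiable.continuous (fun t => (h1 t).differentiableAt)).continuousOn
  · intro t _
    exact (h1 t).hasDerivWithinAt
  · intro t _
    exact (h2 t).hasDerivWithinAt
  · intro t _
    exact h3 t

end Helpers


/-- For a probability measure `p` supported in the closed ball of radius `ρ` in `ℝ^d`,
the score `x ↦ ∇ log p_{σ²}(x)` is Lipschitz with constant `ρ²/σ⁴` if `ρ² ≥ σ²`,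
and with constant `1/σ²` otherwise. -/
theorem stmt_2 (d : ℕ) (ρ σ : ℝ) (hρ : 0 < ρ) (hσ : 0 < σ)
    (p : Measure (EuclideanSpace ℝ (Fin d))) [IsProbabilityMeasure p]
    (hsupp : p (Metric.closedBall (0 : EuclideanSpace ℝ (Fin d)) ρ)ᶜ = 0) :
    (σ ^ 2 ≤ ρ ^ 2 →
        LipschitzWith (Real.toNNReal (ρ ^ 2 / σ ^ 4))
          (fun x => gradient (fun w => Real.log (smoothedDensity d σ p w)) x)) ∧
      (ρ ^ 2 < σ ^ 2 →
        LipschitzWith (Real.toNNReal (1 / σ ^ 2))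
          (fun x => gradient (fun w => Real.log (smoothedDensity d σ p w)) x)) := by
  classical
  have hσ2 : (0:ℝ) < σ ^ 2 := by positivity
  have hσ4 : (0:ℝ) < σ ^ 4 := by positivity
  have haeρ : ∀ᵐ y ∂p, ‖y‖ ≤ ρ := by
    rw [ae_iff]
    convert hsupp using 2
    ext y
    simp [Metric.mem_closedBall, dist_zero_right]
  set c : ℝ := (2 * Real.pi * σ ^ 2) ^ (-(d : ℝ) / 2) with hc
  have hcpos : 0 < c := Real.rpow_pos_of_pos (by positivity) _
  set h : EuclideanSpace ℝ (Fin d) → ℝ :=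
    fun w => ∫ y, Real.exp (((inner ℝ w y : ℝ) - ‖y‖ ^ 2 / 2) / σ ^ 2) ∂p with hh
  -- measurability of the exponent
  have hmeasa : ∀ w : EuclideanSpace ℝ (Fin d),
      AEStronglyMeasurable (fun y : EuclideanSpace ℝ (Fin d) =>
        ((inner ℝ w y : ℝ) - ‖y‖ ^ 2 / 2) / σ ^ 2) p := by
    intro w
    apply Continuous.aestronglyMeasurable
    exact (((continuous_const.inner continuous_id).sub
      ((continuous_norm.pow 2).div_const 2)).div_const _)
  -- a.e. bound on the exponent
  have hbounda : ∀ w : EuclideanSpace ℝ (Fin d), ∀ᵐ y ∂p,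
      |((inner ℝ w y : ℝ) - ‖y‖ ^ 2 / 2) / σ ^ 2| ≤ (‖w‖ * ρ + ρ ^ 2 / 2) / σ ^ 2 := by
    intro w
    filter_upwards [haeρ] with y hy
    rw [abs_div, abs_of_pos hσ2]
    apply (div_le_div_iff_of_pos_right hσ2).mpr
    have h1 : |(inner ℝ w y : ℝ)| ≤ ‖w‖ * ‖y‖ := abs_real_inner_le_norm w y
    have h2 : ‖w‖ * ‖y‖ ≤ ‖w‖ * ρ := mul_le_mul_of_nonneg_left hy (norm_nonneg w)
    have h3 : ‖y‖ ^ 2 ≤ ρ ^ 2 := pow_le_pow_left₀ (norm_nonneg _) hy 2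
    calc |(inner ℝ w y : ℝ) - ‖y‖ ^ 2 / 2| ≤ |(inner ℝ w y : ℝ)| + |‖y‖ ^ 2 / 2| := abs_sub _ _
    _ = |(inner ℝ w y : ℝ)| + ‖y‖ ^ 2 / 2 := by
          rw [abs_of_nonneg (show (0:ℝ) ≤ ‖y‖ ^ 2 / 2 by positivity)]
    _ ≤ ‖w‖ * ρ + ρ ^ 2 / 2 := by linarith
  have hpos : ∀ w, 0 < h w := fun w => expint_pos (hmeasa w) (hbounda w)
  -- decomposition of the smoothed density
  have hGauss : ∀ w y : EuclideanSpace ℝ (Fin d), gaussDensity d σ (w - y)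
      = (c * Real.exp (-‖w‖ ^ 2 / (2 * σ ^ 2))) *
        Real.exp (((inner ℝ w y : ℝ) - ‖y‖ ^ 2 / 2) / σ ^ 2) := by
    intro w y
    have hexp : -‖w - y‖ ^ 2 / (2 * σ ^ 2)
        = -‖w‖ ^ 2 / (2 * σ ^ 2) + ((inner ℝ w y : ℝ) - ‖y‖ ^ 2 / 2) / σ ^ 2 := by
      rw [norm_sub_sq_real]
      field_simp
      ring
    rw [gaussDensity, hexp, Real.exp_add, ← hc]
    ring
  have hsm : ∀ w, smoothedDensity d σ p w
      = c * Real.exp (-‖w‖ ^ 2 / (2 * σ ^ 2)) * h w := by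
    intro w
    rw [smoothedDensity]
    calc ∫ y, gaussDensity d σ (w - y) ∂p
        = ∫ y, (c * Real.exp (-‖w‖ ^ 2 / (2 * σ ^ 2))) *
            Real.exp (((inner ℝ w y : ℝ) - ‖y‖ ^ 2 / 2) / σ ^ 2) ∂p := by
          congr 1; funext y; exact hGauss w y
    _ = c * Real.exp (-‖w‖ ^ 2 / (2 * σ ^ 2)) * h w := MeasureTheory.integral_const_mul _ _
  set Fd : EuclideanSpace ℝ (Fin d) → ℝ :=
    fun w => Real.log c + (-‖w‖ ^ 2 / (2 * σ ^ 2)) + Real.log (h w) with hFd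
  have Feq : (fun w => Real.log (smoothedDensity d σ p w)) = Fd := by
    funext w
    rw [hsm w]
    rw [Real.log_mul (by positivity) (ne_of_gt (hpos w)),
      Real.log_mul (ne_of_gt hcpos) (ne_of_gt (Real.exp_pos _)), Real.log_exp]
  -- differentiability of h
  have hFi : ∀ (y x : EuclideanSpace ℝ (Fin d)),
      HasFDerivAt (fun x : EuclideanSpace ℝ (Fin d) =>
          Real.exp (((inner ℝ x y : ℝ) - ‖y‖ ^ 2 / 2) / σ ^ 2))
        (Real.exp (((inner ℝ x y : ℝ) - ‖y‖ ^ 2 / 2) / σ ^ 2) • ((σ ^ 2)⁻¹ • innerSL ℝ y)) x := by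
    intro y x
    have hbase : HasFDerivAt (fun x : EuclideanSpace ℝ (Fin d) =>
        ((inner ℝ x y : ℝ) - ‖y‖ ^ 2 / 2) / σ ^ 2) ((σ ^ 2)⁻¹ • innerSL ℝ y) x := by
      have h1 : HasFDerivAt (fun x : EuclideanSpace ℝ (Fin d) => (inner ℝ y x : ℝ))
          (innerSL ℝ y) x := (innerSL ℝ y).hasFDerivAt
      have h2 := (h1.sub_const (‖y‖ ^ 2 / 2)).const_mul ((σ ^ 2)⁻¹)
      have heq : (fun x : EuclideanSpace ℝ (Fin d) => ((inner ℝ x y : ℝ) - ‖y‖ ^ 2 / 2) / σ ^ 2)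
          = fun x : EuclideanSpace ℝ (Fin d) => (σ ^ 2)⁻¹ * ((inner ℝ y x : ℝ) - ‖y‖ ^ 2 / 2) := by
        funext x'
        rw [real_inner_comm]
        ring
      rw [heq]
      exact h2
    exact hbase.exp
  have hder_h : ∀ x₀ : EuclideanSpace ℝ (Fin d), HasFDerivAt h
      (∫ y, Real.exp (((inner ℝ x₀ y : ℝ) - ‖y‖ ^ 2 / 2) / σ ^ 2) •
        ((σ ^ 2)⁻¹ • innerSL ℝ y) ∂p) x₀ := by
    intro x₀
    have main : HasFDerivAt (fun x : EuclideanSpace ℝ (Fin d) =>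
        ∫ y, Real.exp (((inner ℝ x y : ℝ) - ‖y‖ ^ 2 / 2) / σ ^ 2) ∂p)
      (∫ y, Real.exp (((inner ℝ x₀ y : ℝ) - ‖y‖ ^ 2 / 2) / σ ^ 2) •
        ((σ ^ 2)⁻¹ • innerSL ℝ y) ∂p) x₀ := by
      apply hasFDerivAt_integral_of_dominated_of_fderiv_le
          (F := fun (x : EuclideanSpace ℝ (Fin d)) (y : EuclideanSpace ℝ (Fin d)) =>
            Real.exp (((inner ℝ x y : ℝ) - ‖y‖ ^ 2 / 2) / σ ^ 2))
          (F' := fun (x : EuclideanSpace ℝ (Fin d)) (y : EuclideanSpace ℝ (Fin d)) =>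
            Real.exp (((inner ℝ x y : ℝ) - ‖y‖ ^ 2 / 2) / σ ^ 2) • ((σ ^ 2)⁻¹ • innerSL ℝ y))
          (bound := fun _ => Real.exp ((‖x₀‖ + 1) * ρ / σ ^ 2) * ((σ ^ 2)⁻¹ * ρ)) (Metric.ball_mem_nhds x₀ one_pos)
      · exact Eventually.of_forall fun x =>
          Real.continuous_exp.comp_aestronglyMeasurable (hmeasa x)
      · exact expint_integrable (hmeasa x₀) (hbounda x₀)
      · apply Continuous.aestronglyMeasurable
        fun_prop
      · filter_upwards [haeρ] with y hy
        intro x hx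
        have hxn : ‖x‖ ≤ ‖x₀‖ + 1 := by
          have h1 : ‖x - x₀‖ < 1 := by simpa [dist_eq_norm] using Metric.mem_ball.mp hx
          have h2 := norm_sub_norm_le x x₀
          linarith
        rw [norm_smul (Real.exp (((inner ℝ x y : ℝ) - ‖y‖ ^ 2 / 2) / σ ^ 2))
            ((σ ^ 2)⁻¹ • innerSL ℝ y),
          norm_smul ((σ ^ 2)⁻¹) (innerSL ℝ y), innerSL_apply_norm]
        rw [Real.norm_eq_abs, Real.norm_eq_abs, abs_of_pos (Real.exp_pos _),
          abs_of_pos (inv_pos.mpr hσ2)]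
        have hexp : Real.exp (((inner ℝ x y : ℝ) - ‖y‖ ^ 2 / 2) / σ ^ 2)
            ≤ Real.exp ((‖x₀‖ + 1) * ρ / σ ^ 2) := by
          apply Real.exp_le_exp.mpr
          apply (div_le_div_iff_of_pos_right hσ2).mpr
          have hi : (inner ℝ x y : ℝ) ≤ ‖x‖ * ‖y‖ := real_inner_le_norm x y
          have hxy : ‖x‖ * ‖y‖ ≤ (‖x₀‖ + 1) * ρ :=
            mul_le_mul hxn hy (norm_nonneg y) (by positivity)
          nlinarith [sq_nonneg ‖y‖]
        apply mul_le_mul hexp _ (by positivity) (le_of_lt (Real.exp_pos _))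
        exact mul_le_mul_of_nonneg_left hy (le_of_lt (inv_pos.mpr hσ2))
      · exact integrable_const _
      · filter_upwards with y
        intro x _
        exact hFi y x
    exact main
  have hdiffh : ∀ w, DifferentiableAt ℝ h w := fun w => (hder_h w).differentiableAt
  have hdiffF : ∀ w, DifferentiableAt ℝ Fd w := by
    intro w
    have d1 : DifferentiableAt ℝ (fun w : EuclideanSpace ℝ (Fin d) => ‖w‖ ^ 2) w :=
      (hasStrictFDerivAt_norm_sq w).hasFDerivAt.differentiableAt
    have d2 : DifferentiableAt ℝ (fun w : EuclideanSpace ℝ (Fin d) => -‖w‖ ^ 2) w := d1.neg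
    have d3 : DifferentiableAt ℝ
        (fun w : EuclideanSpace ℝ (Fin d) => -‖w‖ ^ 2 / (2 * σ ^ 2)) w := by
      have heq : (fun w : EuclideanSpace ℝ (Fin d) => -‖w‖ ^ 2 / (2 * σ ^ 2))
          = fun w : EuclideanSpace ℝ (Fin d) => (2 * σ ^ 2)⁻¹ * -‖w‖ ^ 2 := by
        funext w'
        ring
      rw [heq]
      exact d2.const_mul ((2 * σ ^ 2)⁻¹)
    have d4 : DifferentiableAt ℝ
        (fun w : EuclideanSpace ℝ (Fin d) => Real.log (h w)) w :=
      (hdiffh w).log (ne_of_gt (hpos w))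
    exact ((differentiableAt_const _).add d3).add d4
  set s : EuclideanSpace ℝ (Fin d) → EuclideanSpace ℝ (Fin d) :=
    fun x => gradient Fd x with hs
  have hgrad : ∀ x, HasGradientAt Fd (s x) x := fun x => (hdiffF x).hasGradientAt
  -- the shared line analysis
  have hline : ∀ x u : EuclideanSpace ℝ (Fin d), ∃ g g' : ℝ → ℝ,
      (∀ t, HasDerivAt (fun t : ℝ => Real.log (h (x + t • u))) (g t) t) ∧
      (∀ t, HasDerivAt g (g' t) t) ∧
      (∀ t, 0 ≤ g' t ∧ g' t ≤ (ρ ^ 2 / σ ^ 4) * ‖u‖ ^ 2) := by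
    intro x u
    set af : EuclideanSpace ℝ (Fin d) → ℝ :=
      fun y => ((inner ℝ x y : ℝ) - ‖y‖ ^ 2 / 2) / σ ^ 2 with haf
    set bf : EuclideanSpace ℝ (Fin d) → ℝ := fun y => (inner ℝ u y : ℝ) / σ ^ 2 with hbf
    have hbmeas : AEStronglyMeasurable bf p := by
      apply Continuous.aestronglyMeasurable
      exact (continuous_const.inner continuous_id).div_const _
    have hR : (0:ℝ) ≤ ‖u‖ * ρ / σ ^ 2 := by positivity
    have hbR : ∀ᵐ y ∂p, |bf y| ≤ ‖u‖ * ρ / σ ^ 2 := by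
      filter_upwards [haeρ] with y hy
      rw [hbf]
      rw [abs_div, abs_of_pos hσ2]
      apply (div_le_div_iff_of_pos_right hσ2).mpr
      calc |(inner ℝ u y : ℝ)| ≤ ‖u‖ * ‖y‖ := abs_real_inner_le_norm u y
      _ ≤ ‖u‖ * ρ := mul_le_mul_of_nonneg_left hy (norm_nonneg u)
    have hHeq : ∀ t : ℝ, h (x + t • u) = ∫ y, Real.exp (af y + t * bf y) ∂p := by
      intro t
      have hstep : h (x + t • u)
          = ∫ y, Real.exp (((inner ℝ (x + t • u) y : ℝ) - ‖y‖ ^ 2 / 2) / σ ^ 2) ∂p := rfl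
      rw [hstep]
      congr 1
      funext y
      congr 1
      show ((inner ℝ (x + t • u) y : ℝ) - ‖y‖ ^ 2 / 2) / σ ^ 2
          = ((inner ℝ x y : ℝ) - ‖y‖ ^ 2 / 2) / σ ^ 2 + t * ((inner ℝ u y : ℝ) / σ ^ 2)
      rw [inner_add_left, real_inner_smul_left]
      ring
    obtain ⟨g, g', hg, hg', hgb⟩ :=
      tilt_log_deriv2 hR (hmeasa x) hbmeas (hbounda x) hbR
    refine ⟨g, g', ?_, hg', ?_⟩
    · intro t
      have hfeq : (fun t : ℝ => Real.log (h (x + t • u)))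
          = fun t : ℝ => Real.log (∫ y, Real.exp (af y + t * bf y) ∂p) := by
        funext t'
        rw [hHeq t']
      rw [hfeq]
      exact hg t
    · intro t
      refine ⟨(hgb t).1, le_trans (hgb t).2 ?_⟩
      have : (‖u‖ * ρ / σ ^ 2) ^ 2 = (ρ ^ 2 / σ ^ 4) * ‖u‖ ^ 2 := by ring
      rw [this]
  -- convexity statements
  have hconv : ConvexOn ℝ Set.univ
      (fun w : EuclideanSpace ℝ (Fin d) => Fd w - (-(1 / σ ^ 2)) / 2 * ‖w‖ ^ 2) := by
    have h1 : (fun w : EuclideanSpace ℝ (Fin d) => Fd w - (-(1 / σ ^ 2)) / 2 * ‖w‖ ^ 2)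
        = fun w => Real.log c + Real.log (h w) := by
      funext w
      rw [hFd]
      ring
    rw [h1]
    apply line_convexOn
    intro x u
    obtain ⟨g, g', hg, hg', hgb⟩ := hline x u
    apply convexOn_univ_of_deriv2' (g := g) (g' := g')
    · intro t
      exact (hg t).const_add (Real.log c)
    · exact hg'
    · exact fun t => (hgb t).1
  have hsmooth : ConvexOn ℝ Set.univ
      (fun w : EuclideanSpace ℝ (Fin d) =>
        (ρ ^ 2 / σ ^ 4 + (-(1 / σ ^ 2))) / 2 * ‖w‖ ^ 2 - Fd w) := by
    have h1 : (fun w : EuclideanSpace ℝ (Fin d) =>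
          (ρ ^ 2 / σ ^ 4 + (-(1 / σ ^ 2))) / 2 * ‖w‖ ^ 2 - Fd w)
        = fun w => (ρ ^ 2 / σ ^ 4) / 2 * ‖w‖ ^ 2 - Real.log c - Real.log (h w) := by
      funext w
      rw [hFd]
      ring
    rw [h1]
    apply line_convexOn
    intro x u
    obtain ⟨g, g', hg, hg', hgb⟩ := hline x u
    have hnl : ∀ t : ℝ, ‖x + t • u‖ ^ 2
        = ‖x‖ ^ 2 + 2 * t * (inner ℝ x u : ℝ) + t ^ 2 * ‖u‖ ^ 2 := by
      intro t
      rw [norm_add_sq_real, real_inner_smul_right, norm_smul, Real.norm_eq_abs, mul_pow, sq_abs]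
      ring
    set L : ℝ := ρ ^ 2 / σ ^ 4 with hL
    have hfeq : (fun t : ℝ => L / 2 * ‖x + t • u‖ ^ 2 - Real.log c - Real.log (h (x + t • u)))
        = fun t : ℝ => L / 2 * (‖x‖ ^ 2 + 2 * t * (inner ℝ x u : ℝ) + t ^ 2 * ‖u‖ ^ 2)
            - (Real.log c + Real.log (h (x + t • u))) := by
      funext t
      rw [hnl t]
      ring
    show ConvexOn ℝ Set.univ
      (fun t : ℝ => L / 2 * ‖x + t • u‖ ^ 2 - Real.log c - Real.log (h (x + t • u)))
    rw [hfeq]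
    have hq : ∀ t : ℝ, HasDerivAt
        (fun t : ℝ => L / 2 * (‖x‖ ^ 2 + 2 * t * (inner ℝ x u : ℝ) + t ^ 2 * ‖u‖ ^ 2))
        (L / 2 * (2 * (inner ℝ x u : ℝ) + 2 * t * ‖u‖ ^ 2)) t := by
      intro t
      have ha' : HasDerivAt (fun t : ℝ => 2 * t * (inner ℝ x u : ℝ)) (2 * (inner ℝ x u : ℝ)) t := by
        simpa using ((hasDerivAt_id t).const_mul 2).mul_const (inner ℝ x u : ℝ)
      have hb' : HasDerivAt (fun t : ℝ => t ^ 2 * ‖u‖ ^ 2) (2 * t * ‖u‖ ^ 2) t := by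
        simpa [pow_one] using (hasDerivAt_pow 2 t).mul_const (‖u‖ ^ 2)
      exact ((ha'.const_add (‖x‖ ^ 2)).add hb').const_mul (L / 2)
    have hq' : ∀ t : ℝ, HasDerivAt
        (fun t : ℝ => L / 2 * (2 * (inner ℝ x u : ℝ) + 2 * t * ‖u‖ ^ 2)) (L * ‖u‖ ^ 2) t := by
      intro t
      have hb' : HasDerivAt (fun t : ℝ => 2 * t * ‖u‖ ^ 2) (2 * ‖u‖ ^ 2) t := by
        simpa using ((hasDerivAt_id t).const_mul 2).mul_const (‖u‖ ^ 2)
      have := (hb'.const_add (2 * (inner ℝ x u : ℝ))).const_mul (L / 2)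
      exact this.congr_deriv (by ring)
    apply convexOn_univ_of_deriv2'
      (g := fun t => L / 2 * (2 * (inner ℝ x u : ℝ) + 2 * t * ‖u‖ ^ 2) - g t)
      (g' := fun t => L * ‖u‖ ^ 2 - g' t)
    · intro t
      exact (hq t).sub ((hg t).const_add (Real.log c))
    · intro t
      exact (hq' t).sub (hg' t)
    · intro t
      have h2' : g' t ≤ L * ‖u‖ ^ 2 := (hgb t).2
      linarith
  -- apply the abstract lemma
  have hα : -(1 / σ ^ 2) ≤ (0:ℝ) := neg_nonpos.mpr (by positivity)
  have hLpos : (0:ℝ) < ρ ^ 2 / σ ^ 4 := by positivity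
  have hmain := aux_lipschitz hgrad (α := -(1 / σ ^ 2)) (L := ρ ^ 2 / σ ^ 4)
    hα hLpos hconv hsmooth
  -- conclude
  rw [Feq]
  constructor
  · intro hcase
    have hKnn : (0:ℝ) ≤ ρ ^ 2 / σ ^ 4 := le_of_lt hLpos
    apply LipschitzWith.of_dist_le_mul
    intro x y
    rw [dist_eq_norm, dist_eq_norm]
    rw [Real.coe_toNNReal _ hKnn]
    refine le_trans (hmain x y) ?_
    apply mul_le_mul_of_nonneg_right _ (norm_nonneg _)
    apply max_le
    · rw [neg_neg]
      rw [div_le_div_iff₀ hσ2 hσ4]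
      nlinarith [hcase, hσ2]
    · have : (0:ℝ) < 1 / σ ^ 2 := by positivity
      linarith
  · intro hcase
    have hKnn : (0:ℝ) ≤ 1 / σ ^ 2 := by positivity
    apply LipschitzWith.of_dist_le_mul
    intro x y
    rw [dist_eq_norm, dist_eq_norm]
    rw [Real.coe_toNNReal _ hKnn]
    refine le_trans (hmain x y) ?_
    apply mul_le_mul_of_nonneg_right _ (norm_nonneg _)
    apply max_le
    · rw [neg_neg]
    · have h1 : ρ ^ 2 / σ ^ 4 ≤ σ ^ 2 / σ ^ 4 := by
        apply (div_le_div_iff_of_pos_right hσ4).mpr (le_of_lt hcase)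
      have h2 : σ ^ 2 / σ ^ 4 = 1 / σ ^ 2 := by
        rw [div_eq_div_iff (ne_of_gt hσ4) (ne_of_gt hσ2)]
        ring
      have h3 : (0:ℝ) < 1 / σ ^ 2 := by positivity
      linarith
end
end

section
/- Let p be a probability measure supported in the closed ball of radius ρ in ℝ^d and p_{σ²} its Gaussian smoothing with variance σ². Then −∇ log p_{σ²} is (1/(2σ²), ρ²/(2σ²))-dissipative; that is, for all x ∈ ℝ^d, ⟨−∇ log p_{σ²}(x), x⟩ ≥ (1/(2σ²))‖x‖² − ρ²/(2σ²). -/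
set_option maxHeartbeats 1000000
set_option synthInstance.maxHeartbeats 400000


open MeasureTheory Real
open scoped RealInnerProductSpace

noncomputable section

lemma aux_texp (σ t : ℝ) (hσ : 0 < σ) :
    t * Real.exp (-t ^ 2 / (2 * σ ^ 2)) ≤ σ := by
  set s : ℝ := t ^ 2 / (2 * σ ^ 2) with hs
  have h1 : s + 1 ≤ Real.exp s := Real.add_one_le_exp _
  have h2 : Real.exp (-t ^ 2 / (2 * σ ^ 2)) * Real.exp s = 1 := by
    rw [← Real.exp_add, hs]; ring_nf; exact Real.exp_zero
  have h3 : (0 : ℝ) < Real.exp (-t ^ 2 / (2 * σ ^ 2)) := Real.exp_pos _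
  have h4 : (0 : ℝ) < Real.exp s := Real.exp_pos _
  have h5 : s * (2 * σ ^ 2) = t ^ 2 := by rw [hs]; field_simp
  have hA : 2 * σ ^ 3 + σ * t ^ 2 ≤ 2 * σ ^ 3 * Real.exp s := by
    nlinarith [mul_le_mul_of_nonneg_left h1 (by positivity : (0:ℝ) ≤ 2 * σ ^ 3),
      mul_le_mul_of_nonneg_left h5.le hσ.le]
  have hB : t * (2 * σ ^ 2) ≤ 2 * σ ^ 3 * Real.exp s := by
    nlinarith [mul_nonneg hσ.le (sq_nonneg (t - σ))]
  have h2' : 2 * σ ^ 3 * (Real.exp (-t ^ 2 / (2 * σ ^ 2)) * Real.exp s) = 2 * σ ^ 3 := by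
    rw [h2]; ring
  nlinarith [mul_le_mul_of_nonneg_left hB h3.le, h2', (by positivity : (0:ℝ) < 2 * σ ^ 2), h3]

lemma gauss_cont (d : ℕ) (σ : ℝ) : Continuous (gaussDensity d σ) := by
  unfold gaussDensity
  exact continuous_const.mul (((continuous_norm.pow 2).neg.div_const _).rexp)

lemma gauss_pos (d : ℕ) (σ : ℝ) (hσ : 0 < σ) (z : EuclideanSpace ℝ (Fin d)) :
    0 < gaussDensity d σ z :=
  mul_pos (Real.rpow_pos_of_pos (by positivity) _) (Real.exp_pos _)

lemma gauss_le (d : ℕ) (σ : ℝ) (hσ : 0 < σ) (z : EuclideanSpace ℝ (Fin d)) :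
    gaussDensity d σ z ≤ (2 * Real.pi * σ ^ 2) ^ (-(d : ℝ) / 2) := by
  unfold gaussDensity
  have h1 : Real.exp (-‖z‖ ^ 2 / (2 * σ ^ 2)) ≤ 1 := by
    rw [Real.exp_le_one_iff, neg_div]
    have : (0:ℝ) ≤ ‖z‖ ^ 2 / (2 * σ ^ 2) := by positivity
    linarith
  have h2 : (0:ℝ) < (2 * Real.pi * σ ^ 2) ^ (-(d : ℝ) / 2) :=
    Real.rpow_pos_of_pos (by positivity) _
  nlinarith

lemma gauss_hasFDerivAt (d : ℕ) (σ : ℝ) (hσ : 0 < σ) (y w : EuclideanSpace ℝ (Fin d)) :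
    HasFDerivAt (fun w => gaussDensity d σ (w - y))
      ((-(σ ^ 2)⁻¹ * gaussDensity d σ (w - y)) • innerSL ℝ (w - y)) w := by
  set C : ℝ := (2 * Real.pi * σ ^ 2) ^ (-(d : ℝ) / 2) with hC
  have h1 : HasFDerivAt (fun w : EuclideanSpace ℝ (Fin d) => ‖w - y‖ ^ 2)
      (2 • (innerSL ℝ (w - y))) w := by
    have := ((hasFDerivAt_id w).sub_const y).norm_sq
    simpa using this
  have h2 : HasDerivAt (fun t : ℝ => C * Real.exp (-t / (2 * σ ^ 2)))
      (C * (Real.exp (-‖w - y‖ ^ 2 / (2 * σ ^ 2)) * (-1 / (2 * σ ^ 2)))) (‖w - y‖ ^ 2) := by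
    have := (((hasDerivAt_id (‖w - y‖ ^ 2)).neg.div_const (2 * σ ^ 2)).exp).const_mul C
    simpa using this
  have h3 := h2.comp_hasFDerivAt w h1
  have heq : (C * (Real.exp (-‖w - y‖ ^ 2 / (2 * σ ^ 2)) * (-1 / (2 * σ ^ 2)))) •
      (2 • (innerSL ℝ (w - y))) =
      (-(σ ^ 2)⁻¹ * gaussDensity d σ (w - y)) • innerSL ℝ (w - y) := by
    ext u
    simp only [ContinuousLinearMap.smul_apply, ContinuousLinearMap.coe_smul',
      Pi.smul_apply, smul_eq_mul, innerSL_apply_apply]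
    rw [nsmul_eq_mul]
    unfold gaussDensity
    rw [hC]
    field_simp
    ring
  rw [heq] at h3
  exact h3

lemma gauss_fderiv_norm_le (d : ℕ) (σ : ℝ) (hσ : 0 < σ) (v : EuclideanSpace ℝ (Fin d)) :
    ‖(-(σ ^ 2)⁻¹ * gaussDensity d σ v) • innerSL ℝ v‖ ≤
      (2 * Real.pi * σ ^ 2) ^ (-(d : ℝ) / 2) / σ := by
  set C : ℝ := (2 * Real.pi * σ ^ 2) ^ (-(d : ℝ) / 2) with hC
  have hCpos : (0:ℝ) < C := Real.rpow_pos_of_pos (by positivity) _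
  refine le_trans (ContinuousLinearMap.opNorm_smul_le _ _) ?_
  rw [innerSL_apply_norm, Real.norm_eq_abs, abs_mul, abs_neg, abs_inv, abs_of_pos
    (by positivity : (0:ℝ) < σ ^ 2), abs_of_pos (gauss_pos d σ hσ v)]
  have hg : gaussDensity d σ v * ‖v‖ = C * (‖v‖ * Real.exp (-‖v‖ ^ 2 / (2 * σ ^ 2))) := by
    unfold gaussDensity; ring
  have h1 : ‖v‖ * Real.exp (-‖v‖ ^ 2 / (2 * σ ^ 2)) ≤ σ := aux_texp σ ‖v‖ hσ
  have h2 : (σ ^ 2)⁻¹ * (gaussDensity d σ v * ‖v‖) ≤ (σ ^ 2)⁻¹ * (C * σ) := by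
    rw [hg]
    have : C * (‖v‖ * Real.exp (-‖v‖ ^ 2 / (2 * σ ^ 2))) ≤ C * σ :=
      mul_le_mul_of_nonneg_left h1 hCpos.le
    exact mul_le_mul_of_nonneg_left this (by positivity)
  calc (σ ^ 2)⁻¹ * gaussDensity d σ v * ‖v‖
      = (σ ^ 2)⁻¹ * (gaussDensity d σ v * ‖v‖) := by ring
    _ ≤ (σ ^ 2)⁻¹ * (C * σ) := h2
    _ = C / σ := by field_simp

/-- For a probability measure `p` supported in the closed ball of radius `ρ` in `ℝ^d`,
the negative score `−∇ log p_{σ²}` is `(1/(2σ²), ρ²/(2σ²))`-dissipative: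
`⟨−∇ log p_{σ²}(x), x⟩ ≥ (1/(2σ²))‖x‖² − ρ²/(2σ²)` for all `x`. -/
theorem stmt_3 (d : ℕ) (ρ σ : ℝ) (hρ : 0 < ρ) (hσ : 0 < σ)
    (p : Measure (EuclideanSpace ℝ (Fin d))) [IsProbabilityMeasure p]
    (hsupp : p (Metric.closedBall (0 : EuclideanSpace ℝ (Fin d)) ρ)ᶜ = 0) :
    ∀ x : EuclideanSpace ℝ (Fin d),
      (1 / (2 * σ ^ 2)) * ‖x‖ ^ 2 - ρ ^ 2 / (2 * σ ^ 2) ≤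
        ⟪-gradient (fun w => Real.log (smoothedDensity d σ p w)) x, x⟫ := by
  intro x
  set C : ℝ := (2 * Real.pi * σ ^ 2) ^ (-(d : ℝ) / 2) with hCdef
  have hCpos : (0:ℝ) < C := Real.rpow_pos_of_pos (by positivity) _
  have hσ2 : (0:ℝ) < σ ^ 2 := by positivity
  -- a.e. support bound
  have hae : ∀ᵐ y ∂p, ‖y‖ ≤ ρ := by
    have h0 : ∀ᵐ y ∂p, y ∈ Metric.closedBall (0 : EuclideanSpace ℝ (Fin d)) ρ := by
      rw [ae_iff]
      exact hsupp
    filter_upwards [h0] with y hy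
    simpa [Metric.mem_closedBall, dist_zero_right] using hy
  -- measurability / integrability of the gaussian integrand
  have hcontw : ∀ w : EuclideanSpace ℝ (Fin d), Continuous fun y : EuclideanSpace ℝ (Fin d) => gaussDensity d σ (w - y) := fun w =>
    (gauss_cont d σ).comp (continuous_const.sub continuous_id)
  have hInt : ∀ w : EuclideanSpace ℝ (Fin d), Integrable (fun y : EuclideanSpace ℝ (Fin d) => gaussDensity d σ (w - y)) p := fun w => by
    refine (integrable_const C).mono' ((hcontw w).aestronglyMeasurable) ?_
    filter_upwards with y
    rw [Real.norm_eq_abs, abs_of_pos (gauss_pos d σ hσ _)]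
    exact gauss_le d σ hσ _
  -- the derivative candidate
  set F' : EuclideanSpace ℝ (Fin d) → EuclideanSpace ℝ (Fin d) → (EuclideanSpace ℝ (Fin d) →L[ℝ] ℝ) := fun w y =>
    (-(σ ^ 2)⁻¹ * gaussDensity d σ (w - y)) • innerSL ℝ (w - y) with hF'def
  have hF'cont : Continuous fun y : EuclideanSpace ℝ (Fin d) => F' x y := by
    apply Continuous.smul (f := fun y => -(σ ^ 2)⁻¹ * gaussDensity d σ (x - y)) (g := fun y => innerSL ℝ (x - y))
    · exact (continuous_const.mul ((gauss_cont d σ).comp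
        (continuous_const.sub continuous_id)))
    · exact (innerSL ℝ).continuous.comp (continuous_const.sub continuous_id)
  have hF'bound : ∀ w y : EuclideanSpace ℝ (Fin d), ‖F' w y‖ ≤ C / σ := fun w y =>
    gauss_fderiv_norm_le d σ hσ (w - y)
  have hF'int : Integrable (fun y : EuclideanSpace ℝ (Fin d) => F' x y) p := by
    refine (integrable_const (C / σ)).mono' hF'cont.aestronglyMeasurable ?_
    filter_upwards with y
    exact hF'bound x y
  -- differentiation under the integral sign
  have hasF : HasFDerivAt (fun w => smoothedDensity d σ p w) (∫ y, F' x y ∂p) x := by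
    refine hasFDerivAt_integral_of_dominated_of_fderiv_le (𝕜 := ℝ)
      (bound := fun _ => C / σ) Filter.univ_mem ?_ (hInt x) hF'cont.aestronglyMeasurable ?_
      (integrable_const _) ?_
    · exact Filter.Eventually.of_forall fun w => ((hcontw w).aestronglyMeasurable)
    · exact Filter.Eventually.of_forall fun y w _ => hF'bound w y
    · exact Filter.Eventually.of_forall fun y w _ => gauss_hasFDerivAt d σ hσ y w
  -- positivity of the smoothed density
  set c₀ : ℝ := C * Real.exp (-(‖x‖ + ρ) ^ 2 / (2 * σ ^ 2)) with hc₀def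
  have hc₀pos : 0 < c₀ := by positivity
  have hfpos : 0 < smoothedDensity d σ p x := by
    have hle : (fun _ : EuclideanSpace ℝ (Fin d) => c₀) ≤ᵐ[p] fun y => gaussDensity d σ (x - y) := by
      filter_upwards [hae] with y hy
      have h1 : ‖x - y‖ ≤ ‖x‖ + ρ := (norm_sub_le x y).trans (by linarith)
      have hsq : ‖x - y‖ ^ 2 ≤ (‖x‖ + ρ) ^ 2 := by nlinarith [norm_nonneg (x - y)]
      have h2 : -(‖x‖ + ρ) ^ 2 / (2 * σ ^ 2) ≤ -‖x - y‖ ^ 2 / (2 * σ ^ 2) := by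
        apply div_le_div_of_nonneg_right ?_ (by positivity : (0:ℝ) ≤ 2 * σ ^ 2) |>.trans_eq rfl
        linarith
      calc c₀ = C * Real.exp (-(‖x‖ + ρ) ^ 2 / (2 * σ ^ 2)) := hc₀def
        _ ≤ C * Real.exp (-‖x - y‖ ^ 2 / (2 * σ ^ 2)) :=
            mul_le_mul_of_nonneg_left (Real.exp_le_exp.2 h2) hCpos.le
        _ = gaussDensity d σ (x - y) := rfl
    have hmono := integral_mono_ae (integrable_const c₀) (hInt x) hle
    rw [integral_const] at hmono
    simp only [probReal_univ, measure_univ, ENNReal.toReal_one, one_smul] at hmono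
    exact lt_of_lt_of_le hc₀pos hmono
  have hne : smoothedDensity d σ p x ≠ 0 := ne_of_gt hfpos
  -- chain rule for the log
  have hlog : HasFDerivAt (fun w => Real.log (smoothedDensity d σ p w))
      ((smoothedDensity d σ p x)⁻¹ • ∫ y, F' x y ∂p) x :=
    (Real.hasDerivAt_log hne).comp_hasFDerivAt x hasF
  have hgrad : gradient (fun w => Real.log (smoothedDensity d σ p w)) x
      = (InnerProductSpace.toDual ℝ (EuclideanSpace ℝ (Fin d))).symm
          ((smoothedDensity d σ p x)⁻¹ • ∫ y, F' x y ∂p) := by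
    unfold gradient
    rw [hlog.fderiv]
  rw [hgrad, inner_neg_left, InnerProductSpace.toDual_symm_apply]
  -- compute the applied derivative
  set I : ℝ := ∫ y, gaussDensity d σ (x - y) * ⟪x - y, x⟫ ∂p with hIdef
  have happ : ((smoothedDensity d σ p x)⁻¹ • ∫ y, F' x y ∂p) x
      = (smoothedDensity d σ p x)⁻¹ * (-(σ ^ 2)⁻¹ * I) := by
    rw [ContinuousLinearMap.smul_apply, smul_eq_mul]
    congr 1
    rw [ContinuousLinearMap.integral_apply hF'int]
    rw [hIdef, ← integral_const_mul]
    congr 1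
    funext y
    simp only [hF'def, ContinuousLinearMap.smul_apply, innerSL_apply_apply, smul_eq_mul]
    ring
  rw [happ]
  -- the key integral inequality
  have hcont2 : Continuous fun y : EuclideanSpace ℝ (Fin d) => gaussDensity d σ (x - y) * ⟪x - y, x⟫ :=
    (hcontw x).mul ((continuous_const.sub continuous_id).inner continuous_const)
  have hint2 : Integrable (fun y : EuclideanSpace ℝ (Fin d) => gaussDensity d σ (x - y) * ⟪x - y, x⟫) p := by
    refine (integrable_const (C * σ * ‖x‖)).mono' hcont2.aestronglyMeasurable ?_
    filter_upwards with y
    have h1 : |⟪x - y, x⟫| ≤ ‖x - y‖ * ‖x‖ := abs_real_inner_le_norm _ _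
    have h2 : gaussDensity d σ (x - y) * ‖x - y‖ ≤ C * σ := by
      have : gaussDensity d σ (x - y) * ‖x - y‖
          = C * (‖x - y‖ * Real.exp (-‖x - y‖ ^ 2 / (2 * σ ^ 2))) := by
        unfold gaussDensity; ring
      rw [this]
      exact mul_le_mul_of_nonneg_left (aux_texp σ _ hσ) hCpos.le
    have hg0 : 0 ≤ gaussDensity d σ (x - y) := (gauss_pos d σ hσ _).le
    rw [Real.norm_eq_abs, abs_mul, abs_of_nonneg hg0]
    calc gaussDensity d σ (x - y) * |⟪x - y, x⟫|
        ≤ gaussDensity d σ (x - y) * (‖x - y‖ * ‖x‖) :=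
          mul_le_mul_of_nonneg_left h1 hg0
      _ = gaussDensity d σ (x - y) * ‖x - y‖ * ‖x‖ := by ring
      _ ≤ C * σ * ‖x‖ := mul_le_mul_of_nonneg_right h2 (norm_nonneg x)
  have hint1 : Integrable (fun y : EuclideanSpace ℝ (Fin d) => (‖x‖ ^ 2 - ρ * ‖x‖) * gaussDensity d σ (x - y)) p :=
    (hInt x).const_mul _
  have hle2 : (fun y : EuclideanSpace ℝ (Fin d) => (‖x‖ ^ 2 - ρ * ‖x‖) * gaussDensity d σ (x - y)) ≤ᵐ[p]
      fun y : EuclideanSpace ℝ (Fin d) => gaussDensity d σ (x - y) * ⟪x - y, x⟫ := by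
    filter_upwards [hae] with y hy
    have hg0 : 0 ≤ gaussDensity d σ (x - y) := (gauss_pos d σ hσ _).le
    have h1 : ⟪y, x⟫ ≤ ρ * ‖x‖ := by
      calc ⟪y, x⟫ ≤ ‖y‖ * ‖x‖ := real_inner_le_norm _ _
        _ ≤ ρ * ‖x‖ := mul_le_mul_of_nonneg_right hy (norm_nonneg x)
    have h2 : ‖x‖ ^ 2 - ρ * ‖x‖ ≤ ⟪x - y, x⟫ := by
      rw [inner_sub_left, real_inner_self_eq_norm_sq]
      linarith
    calc (‖x‖ ^ 2 - ρ * ‖x‖) * gaussDensity d σ (x - y)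
        = gaussDensity d σ (x - y) * (‖x‖ ^ 2 - ρ * ‖x‖) := by ring
      _ ≤ gaussDensity d σ (x - y) * ⟪x - y, x⟫ := mul_le_mul_of_nonneg_left h2 hg0
  have h7 : (‖x‖ ^ 2 - ρ * ‖x‖) * smoothedDensity d σ p x ≤ I := by
    have := integral_mono_ae hint1 hint2 hle2
    rwa [integral_const_mul] at this
  -- final arithmetic
  have key : (σ ^ 2)⁻¹ * (‖x‖ ^ 2 - ρ * ‖x‖)
      ≤ -((smoothedDensity d σ p x)⁻¹ * (-(σ ^ 2)⁻¹ * I)) := by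
    have hrw : -((smoothedDensity d σ p x)⁻¹ * (-(σ ^ 2)⁻¹ * I))
        = (smoothedDensity d σ p x)⁻¹ * ((σ ^ 2)⁻¹ * I) := by ring
    rw [hrw]
    have hstep : (smoothedDensity d σ p x)⁻¹ *
        ((σ ^ 2)⁻¹ * ((‖x‖ ^ 2 - ρ * ‖x‖) * smoothedDensity d σ p x))
        ≤ (smoothedDensity d σ p x)⁻¹ * ((σ ^ 2)⁻¹ * I) :=
      mul_le_mul_of_nonneg_left
        (mul_le_mul_of_nonneg_left h7 (by positivity)) (inv_nonneg.2 hfpos.le)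
    refine le_trans (le_of_eq ?_) hstep
    field_simp
  refine le_trans ?_ key
  have hid : (σ ^ 2)⁻¹ * (‖x‖ ^ 2 - ρ * ‖x‖)
      - ((1 / (2 * σ ^ 2)) * ‖x‖ ^ 2 - ρ ^ 2 / (2 * σ ^ 2))
      = (‖x‖ - ρ) ^ 2 / (2 * σ ^ 2) := by
    field_simp
    ring
  have hnn : (0:ℝ) ≤ (‖x‖ - ρ) ^ 2 / (2 * σ ^ 2) := by positivity
  linarith


end
end

section
/- Let c > 0, d' ≥ 2, and define s(u) = sinh(c u). Set R = (log 2)/c and suppose δ ≥ 4R. Then ((s(R/2)/s(R))^{d'−1}) · (∫₀^{δ/4} s(t)^{d'−1} dt)/(∫₀^{2R} s(t)^{d'−1} dt) ≥ 4^{1−d'} · (δ/(16R)) · exp(c(d'−1)(δ/8 − 5R/2)). -/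
private lemma stmt12_aux (x d r s : ℝ) (hr : r ≠ 0) (n : ℕ) :
    (x / 4 / (3 / 4)) ^ n * ((d / 8 * s ^ n) / (2 * r * (15/8 : ℝ) ^ n))
      = d / (16 * r) * ((x / 3) * s * (8 / 15)) ^ n := by
  rw [mul_pow, mul_pow, show x / 4 / (3/4 : ℝ) = x / 3 by ring,
    show ((8:ℝ)/15) ^ n = (((15:ℝ)/8) ^ n)⁻¹ by rw [← inv_pow]; norm_num]
  have hp : ((15:ℝ)/8) ^ n ≠ 0 := by positivity
  field_simp
  ring

/-- Analytic estimate used in the diameter bound. For `s(u) = sinh(cu)`,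
`R = (log 2)/c` and `δ ≥ 4R`,
`(s(R/2)/s(R))^{d'−1} · (∫₀^{δ/4} s^{d'−1})/(∫₀^{2R} s^{d'−1})
  ≥ 4^{1−d'} · (δ/(16R)) · exp(c(d'−1)(δ/8 − 5R/2))`. -/
theorem stmt_12 (c : ℝ) (hc : 0 < c) (d' : ℕ) (hd : 2 ≤ d') (R δ : ℝ)
    (hR : R = Real.log 2 / c) (hδ : 4 * R ≤ δ) :
    (4 : ℝ) ^ ((1 : ℤ) - (d' : ℤ)) * (δ / (16 * R)) *
        Real.exp (c * ((d' : ℝ) - 1) * (δ / 8 - 5 * R / 2)) ≤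
      (Real.sinh (c * (R / 2)) / Real.sinh (c * R)) ^ (d' - 1) *
        ((∫ t in (0 : ℝ)..(δ / 4), Real.sinh (c * t) ^ (d' - 1)) /
          (∫ t in (0 : ℝ)..(2 * R), Real.sinh (c * t) ^ (d' - 1))) := by
  set n := d' - 1 with hn
  have hn1 : 1 ≤ n := by omega
  have hlog2 : (0:ℝ) < Real.log 2 := Real.log_pos (by norm_num)
  have hR0 : 0 < R := by rw [hR]; positivity
  have hδ0 : 0 < δ := lt_of_lt_of_le (by linarith) hδ
  have hcR : c * R = Real.log 2 := by rw [hR]; field_simp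
  set a := Real.exp (Real.log 2 / 2) with haa
  have ha0 : 0 < a := Real.exp_pos _
  have ha2 : a ^ 2 = 2 := by
    rw [haa, ← Real.exp_nat_mul, show (2:ℕ) * (Real.log 2 / 2) = Real.log 2 by push_cast; ring, Real.exp_log]
    norm_num
  set E := Real.exp (c * (δ / 8)) with hEE
  have hE0 : 0 < E := Real.exp_pos _
  have haE : a ≤ E := by
    rw [haa, hEE]
    apply Real.exp_le_exp.mpr
    nlinarith [hcR]
  set sδ := Real.sinh (c * (δ / 8)) with hsδd
  have hsδ : E / 4 ≤ sδ := by
    rw [hsδd, Real.sinh_eq, Real.exp_neg, ← hEE]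
    rw [div_le_div_iff₀ (by norm_num) (by norm_num)]
    have h2 : (2:ℝ) ≤ E ^ 2 := by nlinarith
    rw [sub_mul]
    have : E⁻¹ * 4 ≤ E * 2 := by
      rw [inv_mul_le_iff₀ hE0]; nlinarith
    linarith
  -- explicit sinh values
  have hsinhR : Real.sinh (c * R) = 3 / 4 := by
    rw [hcR, Real.sinh_eq, Real.exp_neg, Real.exp_log (by norm_num)]
    norm_num
  have hsinhR2 : Real.sinh (c * (R / 2)) = a / 4 := by
    have : c * (R / 2) = Real.log 2 / 2 := by rw [← hcR]; ring
    rw [this, Real.sinh_eq, Real.exp_neg, ← haa]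
    have h1a : a⁻¹ = a / 2 := by
      field_simp
      nlinarith
    rw [h1a]; ring
  have hsinh2R : Real.sinh (c * (2 * R)) = 15 / 8 := by
    have : c * (2 * R) = Real.log 2 + Real.log 2 := by rw [← hcR]; ring
    rw [this, Real.sinh_eq, Real.exp_neg, Real.exp_add, Real.exp_log (by norm_num)]
    norm_num
  have hexp5 : Real.exp (c * (δ / 8 - 5 * R / 2)) = E / (4 * a) := by
    have h : c * (δ / 8 - 5 * R / 2)
        = c * (δ / 8) - (Real.log 2 + Real.log 2 + Real.log 2 / 2) := by
      rw [← hcR]; ring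
    rw [h, Real.exp_sub, Real.exp_add, Real.exp_add, Real.exp_log (by norm_num), ← haa, ← hEE]
    ring
  -- integrability and positivity of integrand
  have hcont : Continuous (fun t : ℝ => Real.sinh (c * t) ^ n) :=
    (Real.continuous_sinh.comp (continuous_const.mul continuous_id)).pow n
  have hint : ∀ x y : ℝ, IntervalIntegrable (fun t : ℝ => Real.sinh (c * t) ^ n)
      MeasureTheory.volume x y := fun x y => hcont.intervalIntegrable x y
  have hmono : ∀ x y : ℝ, 0 ≤ x → x ≤ y →
      Real.sinh (c * x) ^ n ≤ Real.sinh (c * y) ^ n := by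
    intro x y hx hxy
    apply pow_le_pow_left₀ (Real.sinh_nonneg_iff.mpr (by positivity))
    exact Real.sinh_le_sinh.mpr (by nlinarith)
  -- lower bound for numerator integral
  have hA : δ / 8 * sδ ^ n ≤ ∫ t in (0:ℝ)..(δ / 4), Real.sinh (c * t) ^ n := by
    have hsplit := intervalIntegral.integral_add_adjacent_intervals
      (hint 0 (δ/8)) (hint (δ/8) (δ/4))
    have h1 : 0 ≤ ∫ t in (0:ℝ)..(δ/8), Real.sinh (c * t) ^ n := by
      apply intervalIntegral.integral_nonneg (by linarith)
      intro u hu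
      exact pow_nonneg (Real.sinh_nonneg_iff.mpr (by nlinarith [hu.1])) n
    have h2 : δ / 8 * sδ ^ n ≤ ∫ t in (δ/8)..(δ/4), Real.sinh (c * t) ^ n := by
      have := intervalIntegral.integral_mono_on (by linarith : δ/8 ≤ δ/4)
        (intervalIntegrable_const) (hint (δ/8) (δ/4))
        (fun x hx => hmono (δ/8) x (by linarith) hx.1)
      simpa [smul_eq_mul, show δ/4 - δ/8 = δ/8 by ring] using this
    linarith
  -- upper bound for denominator integral
  have hB : (∫ t in (0:ℝ)..(2 * R), Real.sinh (c * t) ^ n)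
      ≤ 2 * R * Real.sinh (c * (2 * R)) ^ n := by
    have := intervalIntegral.integral_mono_on (by linarith : (0:ℝ) ≤ 2 * R)
      (hint 0 (2*R)) (intervalIntegrable_const)
      (fun x hx => hmono x (2*R) hx.1 hx.2)
    simpa [smul_eq_mul, mul_comm] using this
  have hBpos : 0 < ∫ t in (0:ℝ)..(2 * R), Real.sinh (c * t) ^ n := by
    apply intervalIntegral.intervalIntegral_pos_of_pos_on (hint 0 (2*R))
    · intro x hx
      exact pow_pos (Real.sinh_pos_iff.mpr (by nlinarith [hx.1])) n
    · linarith
  have hApos : 0 ≤ δ / 8 * sδ ^ n := by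
    apply mul_nonneg (by linarith)
    exact pow_nonneg (le_trans (by linarith : (0:ℝ) ≤ E / 4) hsδ) n
  -- combine the two integral bounds
  have hdiv : (δ / 8 * sδ ^ n) / (2 * R * Real.sinh (c * (2 * R)) ^ n)
      ≤ (∫ t in (0:ℝ)..(δ / 4), Real.sinh (c * t) ^ n) /
        (∫ t in (0:ℝ)..(2 * R), Real.sinh (c * t) ^ n) :=
    div_le_div₀ (le_trans hApos hA) hA hBpos hB
  have hPpos : 0 ≤ (Real.sinh (c * (R / 2)) / Real.sinh (c * R)) ^ n := by
    rw [hsinhR, hsinhR2]; positivity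
  have hstep : (Real.sinh (c * (R / 2)) / Real.sinh (c * R)) ^ n *
        ((δ / 8 * sδ ^ n) / (2 * R * Real.sinh (c * (2 * R)) ^ n))
      ≤ (Real.sinh (c * (R / 2)) / Real.sinh (c * R)) ^ n *
        ((∫ t in (0:ℝ)..(δ / 4), Real.sinh (c * t) ^ n) /
          (∫ t in (0:ℝ)..(2 * R), Real.sinh (c * t) ^ n)) :=
    mul_le_mul_of_nonneg_left hdiv hPpos
  refine le_trans ?_ hstep
  -- now everything is explicit
  rw [hsinhR, hsinhR2, hsinh2R]
  -- rewrite LHS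
  have hL1 : (4 : ℝ) ^ ((1 : ℤ) - (d' : ℤ)) = (4 : ℝ)⁻¹ ^ n := by
    have h : (1 : ℤ) - (d' : ℤ) = -(n : ℤ) := by simp only [hn]; omega
    rw [h, zpow_neg, inv_pow, zpow_natCast]
  have hL2 : Real.exp (c * ((d' : ℝ) - 1) * (δ / 8 - 5 * R / 2))
      = Real.exp (c * (δ / 8 - 5 * R / 2)) ^ n := by
    rw [← Real.exp_nat_mul]
    congr 1
    have : ((d' : ℝ) - 1) = (n : ℝ) := by
      rw [hn]; push_cast [Nat.cast_sub (by omega : 1 ≤ d')]; ring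
    rw [this]; ring
  rw [hL1, hL2, hexp5]
  have hRne : R ≠ 0 := ne_of_gt hR0
  have heq := stmt12_aux a δ R sδ hRne n
  rw [heq]
  have hbase : (4 : ℝ)⁻¹ * (E / (4 * a)) ≤ (a / 3) * sδ * (8 / 15) := by
    rw [show (4:ℝ)⁻¹ * (E / (4 * a)) = E / (16 * a) by ring,
      div_le_iff₀ (by positivity)]
    have h : a / 3 * sδ * (8 / 15) * (16 * a) = 128 / 45 * a ^ 2 * sδ := by ring
    rw [h, ha2]
    linarith
  calc (4 : ℝ)⁻¹ ^ n * (δ / (16 * R)) * (E / (4 * a)) ^ n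
      = δ / (16 * R) * ((4:ℝ)⁻¹ * (E / (4 * a))) ^ n := by rw [mul_pow]; ring
    _ ≤ δ / (16 * R) * ((a / 3) * sδ * (8 / 15)) ^ n := by
        apply mul_le_mul_of_nonneg_left _ (by positivity)
        exact pow_le_pow_left₀ (by positivity) hbase n
end

section
/- Let p be a probability measure on ℝ^d supported in the ball of radius ρ and p_{σ²} = p ∗ N(0, σ²I). Then the Jacobian of x ↦ e(x) (the posterior mean map) equals Σ_x/σ², where Σ_x is the covariance of the measure q_x with density g_{σ²}(x−·)/p_{σ²}(x) against p. Consequently e is differentiable with positive semidefinite symmetric Jacobian, and ‖J_e(x)‖_{op} ≤ ρ²/σ². -/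
open MeasureTheory Real
open scoped RealInnerProductSpace

noncomputable section

/-- The posterior mean `e(x)` of the tilted measure `q_x`. -/
def tiltedMean (d : ℕ) (σ : ℝ) (p : Measure (EuclideanSpace ℝ (Fin d)))
    (x : EuclideanSpace ℝ (Fin d)) : EuclideanSpace ℝ (Fin d) :=
  (smoothedDensity d σ p x)⁻¹ • ∫ y, gaussDensity d σ (x - y) • y ∂p

namespace Stmt17Aux

variable {d : ℕ} {σ : ℝ}

lemma gauss_pos (hσ : 0 < σ) (z : EuclideanSpace ℝ (Fin d)) : 0 < gaussDensity d σ z := by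
  unfold gaussDensity
  have h : (0:ℝ) < 2 * Real.pi * σ ^ 2 := by positivity
  positivity

lemma gauss_le (hσ : 0 < σ) (z : EuclideanSpace ℝ (Fin d)) :
    gaussDensity d σ z ≤ (2 * Real.pi * σ ^ 2) ^ (-(d : ℝ) / 2) := by
  unfold gaussDensity
  have h : (0:ℝ) < 2 * Real.pi * σ ^ 2 := by positivity
  have h2 : Real.exp (-‖z‖ ^ 2 / (2 * σ ^ 2)) ≤ 1 := by
    rw [Real.exp_le_one_iff]
    have : (0:ℝ) ≤ ‖z‖ ^ 2 := by positivity
    have h3 : (0:ℝ) < 2 * σ ^ 2 := by positivity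
    rw [neg_div]
    exact neg_nonpos.2 (div_nonneg (by positivity) h3.le)
  calc (2 * Real.pi * σ ^ 2) ^ (-(d : ℝ) / 2) * Real.exp (-‖z‖ ^ 2 / (2 * σ ^ 2))
      ≤ (2 * Real.pi * σ ^ 2) ^ (-(d : ℝ) / 2) * 1 := by
        exact mul_le_mul_of_nonneg_left h2 (Real.rpow_pos_of_pos h _).le
    _ = _ := mul_one _

lemma gauss_cont : Continuous (gaussDensity d σ) := by
  unfold gaussDensity
  fun_prop

/-- The derivative in `x` of `x ↦ g (x - y)`. -/
def gderiv (d : ℕ) (σ : ℝ) (x y : EuclideanSpace ℝ (Fin d)) :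
    EuclideanSpace ℝ (Fin d) →L[ℝ] ℝ :=
  (-(σ ^ 2)⁻¹ * gaussDensity d σ (x - y)) • innerSL ℝ (x - y)

lemma gderiv_apply (x y u : EuclideanSpace ℝ (Fin d)) :
    gderiv d σ x y u = (-(σ ^ 2)⁻¹ * gaussDensity d σ (x - y)) * ⟪x - y, u⟫ := by
  simp only [gderiv, ContinuousLinearMap.smul_apply, innerSL_apply_apply, smul_eq_mul]

lemma norm_gderiv (hσ : 0 < σ) (x y : EuclideanSpace ℝ (Fin d)) :
    ‖gderiv d σ x y‖ ≤ (σ ^ 2)⁻¹ * gaussDensity d σ (x - y) * ‖x - y‖ := by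
  have hg := gauss_pos (d := d) hσ (x - y)
  refine ContinuousLinearMap.opNorm_le_bound _ (by positivity) fun u => ?_
  rw [gderiv_apply, Real.norm_eq_abs, abs_mul, abs_mul, abs_neg,
    abs_of_nonneg (by positivity : (0:ℝ) ≤ (σ ^ 2)⁻¹), abs_of_pos hg]
  calc (σ ^ 2)⁻¹ * gaussDensity d σ (x - y) * |⟪x - y, u⟫|
      ≤ (σ ^ 2)⁻¹ * gaussDensity d σ (x - y) * (‖x - y‖ * ‖u‖) :=
        mul_le_mul_of_nonneg_left (abs_real_inner_le_norm _ _) (by positivity)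
    _ = (σ ^ 2)⁻¹ * gaussDensity d σ (x - y) * ‖x - y‖ * ‖u‖ := by ring

lemma hasFDerivAt_gauss (hσ : 0 < σ) (y x : EuclideanSpace ℝ (Fin d)) :
    HasFDerivAt (fun x => gaussDensity d σ (x - y)) (gderiv d σ x y) x := by
  have h1 : HasFDerivAt (fun x : EuclideanSpace ℝ (Fin d) => x - y)
      (ContinuousLinearMap.id ℝ (EuclideanSpace ℝ (Fin d))) x :=
    (hasFDerivAt_id x).sub_const y
  have h2 := h1.inner ℝ h1
  have h3 := ((h2.const_mul (-(2 * σ ^ 2)⁻¹)).exp.const_mul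
    ((2 * Real.pi * σ ^ 2) ^ (-(d : ℝ) / 2)))
  have hfun : (fun x : EuclideanSpace ℝ (Fin d) => gaussDensity d σ (x - y)) =
      fun x => (2 * Real.pi * σ ^ 2) ^ (-(d : ℝ) / 2) *
        Real.exp (-(2 * σ ^ 2)⁻¹ * ⟪x - y, x - y⟫) := by
    funext x
    rw [gaussDensity, real_inner_self_eq_norm_sq]
    ring_nf
  rw [hfun]
  refine h3.congr_fderiv ?_
  symm
  ext u
  rw [gderiv_apply, gaussDensity]
  simp only [ContinuousLinearMap.smul_apply, ContinuousLinearMap.comp_apply,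
    ContinuousLinearMap.prod_apply, ContinuousLinearMap.id_apply, fderivInnerCLM_apply,
    smul_eq_mul, real_inner_self_eq_norm_sq]
  rw [real_inner_comm u (x - y)]
  rw [show -‖x - y‖ ^ 2 / (2 * σ ^ 2) = -(2 * σ ^ 2)⁻¹ * ‖x - y‖ ^ 2 from by ring]
  ring


section Measure

variable {p : Measure (EuclideanSpace ℝ (Fin d))} [IsProbabilityMeasure p] {ρ : ℝ}

lemma cont_gauss_sub (x : EuclideanSpace ℝ (Fin d)) :
    Continuous (fun y : EuclideanSpace ℝ (Fin d) => gaussDensity d σ (x - y)) :=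
  gauss_cont.comp (continuous_const.sub continuous_id)

lemma cont_gderiv (x : EuclideanSpace ℝ (Fin d)) : Continuous (fun y => gderiv d σ x y) := by
  unfold gderiv
  exact (continuous_const.mul ((gauss_cont).comp (continuous_const.sub continuous_id))).smul
    ((innerSL ℝ).continuous.comp (continuous_const.sub continuous_id))

lemma integrable_bdd {F : Type*} [NormedAddCommGroup F] {f : EuclideanSpace ℝ (Fin d) → F} {c : ℝ}
    (hm : AEStronglyMeasurable f p) (hb : ∀ᵐ y ∂p, ‖f y‖ ≤ c) : Integrable f p :=
  (integrable_const c).mono' hm hb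

lemma int_gauss (hσ : 0 < σ) (x : EuclideanSpace ℝ (Fin d)) :
    Integrable (fun y => gaussDensity d σ (x - y)) p :=
  integrable_bdd (cont_gauss_sub x).aestronglyMeasurable (Filter.Eventually.of_forall fun y => by
    rw [Real.norm_eq_abs, abs_of_pos (gauss_pos hσ _)]; exact gauss_le hσ _)

lemma smoothed_pos (hσ : 0 < σ) (x : EuclideanSpace ℝ (Fin d)) :
    0 < smoothedDensity d σ p x := by
  rw [smoothedDensity, integral_pos_iff_support_of_nonneg
    (fun y => (gauss_pos hσ _).le) (int_gauss hσ x)]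
  have h : (Function.support fun y => gaussDensity d σ (x - y)) = Set.univ :=
    Set.eq_univ_of_forall fun y => (gauss_pos hσ _).ne'
  rw [h]
  simp

lemma norm_le_of_ball {x x' : EuclideanSpace ℝ (Fin d)} (hx' : x' ∈ Metric.ball x 1) :
    ‖x'‖ ≤ ‖x‖ + 1 := by
  have h := Metric.mem_ball.mp hx'
  rw [dist_eq_norm] at h
  calc ‖x'‖ = ‖(x' - x) + x‖ := by congr 1; abel
    _ ≤ ‖x' - x‖ + ‖x‖ := norm_add_le _ _
    _ ≤ ‖x‖ + 1 := by linarith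

lemma hasFDerivAt_smoothed (hσ : 0 < σ) (hρ : 0 ≤ ρ) (hae : ∀ᵐ y ∂p, ‖y‖ ≤ ρ)
    (x : EuclideanSpace ℝ (Fin d)) :
    HasFDerivAt (smoothedDensity d σ p) (∫ y, gderiv d σ x y ∂p) x := by
  refine hasFDerivAt_integral_of_dominated_of_fderiv_le (μ := p)
    (F := fun x y => gaussDensity d σ (x - y)) (F' := fun x y => gderiv d σ x y) (x₀ := x)
    (bound := fun _ => (σ ^ 2)⁻¹ * (2 * Real.pi * σ ^ 2) ^ (-(d : ℝ) / 2) * (‖x‖ + 1 + ρ))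
    (s := Metric.ball x 1) (Metric.ball_mem_nhds x one_pos)
    (Filter.Eventually.of_forall fun x' => (cont_gauss_sub x').aestronglyMeasurable)
    (int_gauss hσ x) (cont_gderiv x).aestronglyMeasurable ?_ (integrable_const _)
    (Filter.Eventually.of_forall fun y x' _ => hasFDerivAt_gauss hσ y x')
  refine hae.mono fun y hy x' hx' => (norm_gderiv hσ x' y).trans ?_
  have h1 : ‖x' - y‖ ≤ ‖x‖ + 1 + ρ := by
    have := norm_le_of_ball hx'
    calc ‖x' - y‖ ≤ ‖x'‖ + ‖y‖ := norm_sub_le _ _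
      _ ≤ ‖x‖ + 1 + ρ := by linarith
  have h2 := gauss_le (d := d) hσ (x' - y)
  have h3 := (gauss_pos (d := d) hσ (x' - y)).le
  exact mul_le_mul (mul_le_mul_of_nonneg_left h2 (by positivity)) h1 (norm_nonneg _)
    (by positivity)

lemma hasFDerivAt_moment (hσ : 0 < σ) (hρ : 0 ≤ ρ) (hae : ∀ᵐ y ∂p, ‖y‖ ≤ ρ)
    (x : EuclideanSpace ℝ (Fin d)) :
    HasFDerivAt (fun x => ∫ y, gaussDensity d σ (x - y) • y ∂p)
      (∫ y, (gderiv d σ x y).smulRight y ∂p) x := by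
  refine hasFDerivAt_integral_of_dominated_of_fderiv_le (μ := p)
    (F := fun x y => gaussDensity d σ (x - y) • y)
    (F' := fun x y => (gderiv d σ x y).smulRight y) (x₀ := x)
    (bound := fun _ => (σ ^ 2)⁻¹ * (2 * Real.pi * σ ^ 2) ^ (-(d : ℝ) / 2) * (‖x‖ + 1 + ρ) * ρ)
    (s := Metric.ball x 1) (Metric.ball_mem_nhds x one_pos)
    (Filter.Eventually.of_forall fun x' =>
      ((cont_gauss_sub x').smul continuous_id).aestronglyMeasurable)
    ?_ ?_ ?_ (integrable_const _)
    (Filter.Eventually.of_forall fun y x' _ => (hasFDerivAt_gauss hσ y x').smul_const y)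
  · refine integrable_bdd (c := (2 * Real.pi * σ ^ 2) ^ (-(d : ℝ) / 2) * ρ)
      (((cont_gauss_sub x).smul continuous_id).aestronglyMeasurable)
      (hae.mono fun y hy => ?_)
    rw [norm_smul, Real.norm_eq_abs, abs_of_pos (gauss_pos hσ _)]
    have h2 := gauss_le (d := d) hσ (x - y)
    have h4 := norm_nonneg y
    have h5 := (gauss_pos (d := d) hσ (x - y)).le
    exact mul_le_mul h2 hy h4 (by positivity)
  · exact ((isBoundedBilinearMap_smulRight (𝕜 := ℝ)).continuous.comp
      ((cont_gderiv x).prodMk continuous_id)).aestronglyMeasurable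
  · refine hae.mono fun y hy x' hx' => ?_
    rw [ContinuousLinearMap.norm_smulRight_apply]
    have h1 : ‖x' - y‖ ≤ ‖x‖ + 1 + ρ := by
      have := norm_le_of_ball hx'
      calc ‖x' - y‖ ≤ ‖x'‖ + ‖y‖ := norm_sub_le _ _
        _ ≤ ‖x‖ + 1 + ρ := by linarith
    have h2 := gauss_le (d := d) hσ (x' - y)
    have h3 := (gauss_pos (d := d) hσ (x' - y)).le
    have h6 := (norm_gderiv hσ x' y)
    calc ‖gderiv d σ x' y‖ * ‖y‖
        ≤ ((σ ^ 2)⁻¹ * gaussDensity d σ (x' - y) * ‖x' - y‖) * ‖y‖ :=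
          mul_le_mul_of_nonneg_right h6 (norm_nonneg y)
      _ ≤ (σ ^ 2)⁻¹ * (2 * Real.pi * σ ^ 2) ^ (-(d : ℝ) / 2) * (‖x‖ + 1 + ρ) * ρ := by
          gcongr


lemma int_gsmul (hσ : 0 < σ) (hae : ∀ᵐ y ∂p, ‖y‖ ≤ ρ) (x : EuclideanSpace ℝ (Fin d)) :
    Integrable (fun y => gaussDensity d σ (x - y) • y) p := by
  refine integrable_bdd (c := (2 * Real.pi * σ ^ 2) ^ (-(d : ℝ) / 2) * ρ)
    (((cont_gauss_sub x).smul continuous_id).aestronglyMeasurable) (hae.mono fun y hy => ?_)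
  rw [norm_smul, Real.norm_eq_abs, abs_of_pos (gauss_pos hσ _)]
  exact mul_le_mul (gauss_le hσ _) hy (norm_nonneg y) (by positivity)

lemma hint_inner {f : EuclideanSpace ℝ (Fin d) → EuclideanSpace ℝ (Fin d)}
    (hf : Integrable f p) (v : EuclideanSpace ℝ (Fin d)) :
    ⟪∫ y, f y ∂p, v⟫ = ∫ y, ⟪f y, v⟫ ∂p := by
  rw [real_inner_comm, ← integral_inner hf]
  exact integral_congr_ae (Filter.Eventually.of_forall fun y => real_inner_comm _ _)

lemma int_inner_gauss (hρ : 0 ≤ ρ) (hσ : 0 < σ) (hae : ∀ᵐ y ∂p, ‖y‖ ≤ ρ) (x w : EuclideanSpace ℝ (Fin d)) :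
    Integrable (fun y => ⟪y, w⟫ * gaussDensity d σ (x - y)) p := by
  refine integrable_bdd (c := ρ * ‖w‖ * (2 * Real.pi * σ ^ 2) ^ (-(d : ℝ) / 2))
    (((continuous_id.inner continuous_const).mul (cont_gauss_sub x)).aestronglyMeasurable)
    (hae.mono fun y hy => ?_)
  rw [Real.norm_eq_abs, abs_mul, abs_of_pos (gauss_pos hσ _)]
  have h1 : |⟪y, w⟫| ≤ ρ * ‖w‖ :=
    (abs_real_inner_le_norm _ _).trans (mul_le_mul_of_nonneg_right hy (norm_nonneg _))
  exact mul_le_mul h1 (gauss_le hσ _) (gauss_pos hσ _).le (by positivity)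

lemma int_inner2_gauss (hρ : 0 ≤ ρ) (hσ : 0 < σ) (hae : ∀ᵐ y ∂p, ‖y‖ ≤ ρ)
    (x u v : EuclideanSpace ℝ (Fin d)) :
    Integrable (fun y => (⟪y, u⟫ * ⟪y, v⟫) * gaussDensity d σ (x - y)) p := by
  refine integrable_bdd (c := (ρ * ‖u‖) * (ρ * ‖v‖) * (2 * Real.pi * σ ^ 2) ^ (-(d : ℝ) / 2))
    ((((continuous_id.inner continuous_const).mul
      (continuous_id.inner continuous_const)).mul (cont_gauss_sub x)).aestronglyMeasurable)
    (hae.mono fun y hy => ?_)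
  rw [Real.norm_eq_abs, abs_mul, abs_mul, abs_of_pos (gauss_pos hσ _)]
  have h1 : |⟪y, u⟫| ≤ ρ * ‖u‖ :=
    (abs_real_inner_le_norm _ _).trans (mul_le_mul_of_nonneg_right hy (norm_nonneg _))
  have h2 : |⟪y, v⟫| ≤ ρ * ‖v‖ :=
    (abs_real_inner_le_norm _ _).trans (mul_le_mul_of_nonneg_right hy (norm_nonneg _))
  exact mul_le_mul (mul_le_mul h1 h2 (abs_nonneg _) (by positivity)) (gauss_le hσ _)
    (gauss_pos hσ _).le (by positivity)

lemma cov_eq (x u v : EuclideanSpace ℝ (Fin d)) : tiltedCov d σ p x u v =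
    (∫ y, (⟪y, u⟫ * ⟪y, v⟫) * gaussDensity d σ (x - y) ∂p) * (smoothedDensity d σ p x)⁻¹ -
      ((∫ y, ⟪y, u⟫ * gaussDensity d σ (x - y) ∂p) * (smoothedDensity d σ p x)⁻¹) *
        ((∫ y, ⟪y, v⟫ * gaussDensity d σ (x - y) ∂p) * (smoothedDensity d σ p x)⁻¹) := by
  rw [tiltedCov]
  simp only [div_eq_mul_inv, ← mul_assoc]
  rw [integral_mul_const, integral_mul_const, integral_mul_const]
  ring

lemma cov_symm (x u v : EuclideanSpace ℝ (Fin d)) :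
    tiltedCov d σ p x u v = tiltedCov d σ p x v u := by
  rw [tiltedCov, tiltedCov]
  have h : (∫ y, (⟪y, u⟫ * ⟪y, v⟫) * (gaussDensity d σ (x - y) / smoothedDensity d σ p x) ∂p)
      = ∫ y, (⟪y, v⟫ * ⟪y, u⟫) * (gaussDensity d σ (x - y) / smoothedDensity d σ p x) ∂p :=
    integral_congr_ae (Filter.Eventually.of_forall fun y => by ring)
  rw [h]
  ring

lemma cov_bounds (hρ : 0 < ρ) (hσ : 0 < σ) (hae : ∀ᵐ y ∂p, ‖y‖ ≤ ρ)
    (x v : EuclideanSpace ℝ (Fin d)) :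
    0 ≤ tiltedCov d σ p x v v ∧ tiltedCov d σ p x v v ≤ ρ ^ 2 * ‖v‖ ^ 2 := by
  have hNpos := smoothed_pos (p := p) hσ x
  have hcov := cov_eq (p := p) (σ := σ) x v v
  set N := smoothedDensity d σ p x with hNdef
  set A := ∫ y, (⟪y, v⟫ * ⟪y, v⟫) * gaussDensity d σ (x - y) ∂p with hA
  set Bv := ∫ y, ⟪y, v⟫ * gaussDensity d σ (x - y) ∂p with hBv
  set m := Bv * N⁻¹ with hm
  have ig := int_gauss (p := p) hσ x
  have i1 := int_inner_gauss hρ.le hσ hae x v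
  have i2 := int_inner2_gauss hρ.le hσ hae x v v
  have hNint : (∫ y, gaussDensity d σ (x - y) ∂p) = N := by rw [hNdef, smoothedDensity]
  have hQ0 : 0 ≤ ∫ y, (⟪y, v⟫ - m) ^ 2 * gaussDensity d σ (x - y) ∂p :=
    integral_nonneg fun y => mul_nonneg (sq_nonneg _) (gauss_pos hσ _).le
  have hexp : (fun y => (⟪y, v⟫ - m) ^ 2 * gaussDensity d σ (x - y)) = fun y =>
      ((⟪y, v⟫ * ⟪y, v⟫) * gaussDensity d σ (x - y)
        - (2 * m) * (⟪y, v⟫ * gaussDensity d σ (x - y)))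
        + (m * m) * gaussDensity d σ (x - y) := funext fun y => by ring
  have hQ : (∫ y, (⟪y, v⟫ - m) ^ 2 * gaussDensity d σ (x - y) ∂p)
      = (A - (2 * m) * Bv) + (m * m) * N := by
    have isub : Integrable (fun y => (⟪y, v⟫ * ⟪y, v⟫) * gaussDensity d σ (x - y)
        - (2 * m) * (⟪y, v⟫ * gaussDensity d σ (x - y))) p := i2.sub (i1.const_mul _)
    have iadd2 : Integrable (fun y => (m * m) * gaussDensity d σ (x - y)) p := ig.const_mul _
    rw [hexp, integral_add isub iadd2, integral_sub i2 (i1.const_mul _), integral_const_mul,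
      integral_const_mul, ← hA, ← hBv, hNint]
  constructor
  · have h2 : tiltedCov d σ p x v v = ((A - (2 * m) * Bv) + (m * m) * N) * N⁻¹ := by
      rw [hcov, hm]
      field_simp
      ring
    rw [h2, ← hQ]
    exact mul_nonneg hQ0 (inv_nonneg.2 hNpos.le)
  · have hA_le : A ≤ ρ ^ 2 * ‖v‖ ^ 2 * N := by
      rw [hA, ← hNint, ← integral_const_mul]
      refine integral_mono_ae i2 (ig.const_mul _) (hae.mono fun y hy => ?_)
      have h1 : |⟪y, v⟫| ≤ ρ * ‖v‖ :=
        (abs_real_inner_le_norm _ _).trans (mul_le_mul_of_nonneg_right hy (norm_nonneg _))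
      have h2 := (gauss_pos (d := d) hσ (x - y)).le
      have haa : ⟪y, v⟫ * ⟪y, v⟫ ≤ (ρ * ‖v‖) * (ρ * ‖v‖) := by
        rw [← abs_mul_abs_self]
        exact mul_le_mul h1 h1 (abs_nonneg _) ((abs_nonneg _).trans h1)
      calc (⟪y, v⟫ * ⟪y, v⟫) * gaussDensity d σ (x - y)
          ≤ ((ρ * ‖v‖) * (ρ * ‖v‖)) * gaussDensity d σ (x - y) :=
            mul_le_mul_of_nonneg_right haa h2
        _ = ρ ^ 2 * ‖v‖ ^ 2 * gaussDensity d σ (x - y) := by ring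
    rw [hcov]
    have h3 : A * N⁻¹ ≤ ρ ^ 2 * ‖v‖ ^ 2 := by
      have h4 := mul_le_mul_of_nonneg_right hA_le (inv_nonneg.2 hNpos.le)
      rwa [mul_assoc, mul_inv_cancel₀ hNpos.ne', mul_one] at h4
    nlinarith [mul_self_nonneg (Bv * N⁻¹)]

lemma key (hρ : 0 < ρ) (hσ : 0 < σ) (hae : ∀ᵐ y ∂p, ‖y‖ ≤ ρ) (x : EuclideanSpace ℝ (Fin d)) :
    ∃ T : EuclideanSpace ℝ (Fin d) →L[ℝ] EuclideanSpace ℝ (Fin d),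
      HasFDerivAt (tiltedMean d σ p) T x ∧
      ∀ u v, ⟪T u, v⟫ = (1 / σ ^ 2) * tiltedCov d σ p x u v := by
  have hσ2 : (σ : ℝ) ^ 2 ≠ 0 := by positivity
  have hNpos := smoothed_pos (p := p) hσ x
  set N := smoothedDensity d σ p x with hNdef
  have hN := hasFDerivAt_smoothed hσ hρ.le hae x
  have hM := hasFDerivAt_moment hσ hρ.le hae x
  set N' := ∫ y, gderiv d σ x y ∂p with hN'def
  set M' := ∫ y, (gderiv d σ x y).smulRight y ∂p with hM'def
  set Mx := ∫ y, gaussDensity d σ (x - y) • y ∂p with hMxdef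
  have hInv : HasFDerivAt (fun x => (smoothedDensity d σ p x)⁻¹)
      ((ContinuousLinearMap.smulRight (1 : ℝ →L[ℝ] ℝ) (-(N ^ 2)⁻¹)).comp N') x :=
    (hasFDerivAt_inv hNpos.ne').comp x hN
  have hT := hInv.smul hM
  refine ⟨_, hT, fun u v => ?_⟩
  -- integrability facts
  have ig : Integrable (fun y => gaussDensity d σ (x - y)) p := int_gauss hσ x
  have igd : Integrable (fun y => gderiv d σ x y) p := by
    refine integrable_bdd
      (c := (σ ^ 2)⁻¹ * (2 * Real.pi * σ ^ 2) ^ (-(d : ℝ) / 2) * (‖x‖ + ρ))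
      (cont_gderiv x).aestronglyMeasurable (hae.mono fun y hy => ?_)
    refine (norm_gderiv hσ x y).trans ?_
    have h1 : ‖x - y‖ ≤ ‖x‖ + ρ := (norm_sub_le _ _).trans (by linarith)
    exact mul_le_mul (mul_le_mul_of_nonneg_left (gauss_le hσ _) (by positivity)) h1
      (norm_nonneg _) (by positivity)
  have igs : Integrable (fun y => (gderiv d σ x y).smulRight y) p := by
    refine integrable_bdd
      (c := (σ ^ 2)⁻¹ * (2 * Real.pi * σ ^ 2) ^ (-(d : ℝ) / 2) * (‖x‖ + ρ) * ρ)
      (((isBoundedBilinearMap_smulRight (𝕜 := ℝ)).continuous.comp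
        ((cont_gderiv x).prodMk continuous_id)).aestronglyMeasurable)
      (hae.mono fun y hy => ?_)
    rw [ContinuousLinearMap.norm_smulRight_apply]
    have h1 : ‖x - y‖ ≤ ‖x‖ + ρ := (norm_sub_le _ _).trans (by linarith)
    have h6 := norm_gderiv (d := d) hσ x y
    calc ‖gderiv d σ x y‖ * ‖y‖
        ≤ ((σ ^ 2)⁻¹ * gaussDensity d σ (x - y) * ‖x - y‖) * ‖y‖ :=
          mul_le_mul_of_nonneg_right h6 (norm_nonneg y)
      _ ≤ (σ ^ 2)⁻¹ * (2 * Real.pi * σ ^ 2) ^ (-(d : ℝ) / 2) * (‖x‖ + ρ) * ρ := by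
          have := (gauss_pos (d := d) hσ (x - y)).le
          have := gauss_le (d := d) hσ (x - y)
          gcongr
  have i1 : ∀ w : EuclideanSpace ℝ (Fin d),
      Integrable (fun y => ⟪y, w⟫ * gaussDensity d σ (x - y)) p := by
    intro w
    refine integrable_bdd (c := ρ * ‖w‖ * (2 * Real.pi * σ ^ 2) ^ (-(d : ℝ) / 2))
      (((continuous_id.inner continuous_const).mul (cont_gauss_sub x)).aestronglyMeasurable)
      (hae.mono fun y hy => ?_)
    rw [Real.norm_eq_abs, abs_mul, abs_of_pos (gauss_pos hσ _)]
    have h1 : |⟪y, w⟫| ≤ ρ * ‖w‖ :=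
      (abs_real_inner_le_norm _ _).trans (mul_le_mul_of_nonneg_right hy (norm_nonneg _))
    exact mul_le_mul h1 (gauss_le hσ _) (gauss_pos hσ _).le (by positivity)
  have i2 : Integrable (fun y => (⟪y, u⟫ * ⟪y, v⟫) * gaussDensity d σ (x - y)) p := by
    refine integrable_bdd (c := (ρ * ‖u‖) * (ρ * ‖v‖) * (2 * Real.pi * σ ^ 2) ^ (-(d : ℝ) / 2))
      ((((continuous_id.inner continuous_const).mul
        (continuous_id.inner continuous_const)).mul (cont_gauss_sub x)).aestronglyMeasurable)
      (hae.mono fun y hy => ?_)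
    rw [Real.norm_eq_abs, abs_mul, abs_mul, abs_of_pos (gauss_pos hσ _)]
    have h1 : |⟪y, u⟫| ≤ ρ * ‖u‖ :=
      (abs_real_inner_le_norm _ _).trans (mul_le_mul_of_nonneg_right hy (norm_nonneg _))
    have h2 : |⟪y, v⟫| ≤ ρ * ‖v‖ :=
      (abs_real_inner_le_norm _ _).trans (mul_le_mul_of_nonneg_right hy (norm_nonneg _))
    exact mul_le_mul (mul_le_mul h1 h2 (abs_nonneg _) (by positivity)) (gauss_le hσ _)
      (gauss_pos hσ _).le (by positivity)
  have i3 : Integrable (fun y => (gderiv d σ x y u) • y) p := by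
    refine integrable_bdd
      (c := (σ ^ 2)⁻¹ * (2 * Real.pi * σ ^ 2) ^ (-(d : ℝ) / 2) * (‖x‖ + ρ) * ‖u‖ * ρ)
      ((((ContinuousLinearMap.apply ℝ ℝ u).continuous.comp
        (cont_gderiv x)).smul continuous_id).aestronglyMeasurable)
      (hae.mono fun y hy => ?_)
    rw [norm_smul]
    have h1 : ‖x - y‖ ≤ ‖x‖ + ρ := (norm_sub_le _ _).trans (by linarith)
    have h2 : ‖gderiv d σ x y u‖ ≤ (σ ^ 2)⁻¹ * (2 * Real.pi * σ ^ 2) ^ (-(d : ℝ) / 2) *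
        (‖x‖ + ρ) * ‖u‖ := by
      refine ((gderiv d σ x y).le_opNorm u).trans ?_
      have h6 := norm_gderiv (d := d) hσ x y
      have h7 : ‖gderiv d σ x y‖ ≤
          (σ ^ 2)⁻¹ * (2 * Real.pi * σ ^ 2) ^ (-(d : ℝ) / 2) * (‖x‖ + ρ) := by
        refine h6.trans ?_
        exact mul_le_mul (mul_le_mul_of_nonneg_left (gauss_le hσ _) (by positivity)) h1
          (norm_nonneg _) (by positivity)
      exact mul_le_mul_of_nonneg_right h7 (norm_nonneg u)
    exact mul_le_mul h2 hy (norm_nonneg y) (by positivity)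
  -- the three moment integrals
  set A := ∫ y, (⟪y, u⟫ * ⟪y, v⟫) * gaussDensity d σ (x - y) ∂p with hA
  set Bu := ∫ y, ⟪y, u⟫ * gaussDensity d σ (x - y) ∂p with hBu
  set Bv := ∫ y, ⟪y, v⟫ * gaussDensity d σ (x - y) ∂p with hBv
  -- identity for N' u
  have hN'u : N' u = (σ ^ 2)⁻¹ * Bu - ((σ ^ 2)⁻¹ * ⟪x, u⟫) * N := by
    rw [hN'def, ContinuousLinearMap.integral_apply igd]
    have he : (fun y => gderiv d σ x y u) = fun y =>
        (σ ^ 2)⁻¹ * (⟪y, u⟫ * gaussDensity d σ (x - y)) -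
          ((σ ^ 2)⁻¹ * ⟪x, u⟫) * gaussDensity d σ (x - y) := by
      funext y; rw [gderiv_apply, inner_sub_left]; ring
    rw [he, integral_sub ((i1 u).const_mul _) (ig.const_mul _), integral_const_mul,
      integral_const_mul, ← hBu]
    have hNint : (∫ y, gaussDensity d σ (x - y) ∂p) = N := by rw [hNdef, smoothedDensity]
    rw [hNint]
  -- identity for ⟪Mx, v⟫
  have hMxv : ⟪Mx, v⟫ = Bv := by
    rw [hMxdef, hint_inner (int_gsmul hσ hae x) v, hBv]
    exact integral_congr_ae (Filter.Eventually.of_forall fun y => by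
      simp only [real_inner_smul_left]; ring)
  -- identity for ⟪M' u, v⟫
  have hM'uv : ⟪M' u, v⟫ = (σ ^ 2)⁻¹ * A - ((σ ^ 2)⁻¹ * ⟪x, u⟫) * Bv := by
    have h1 : M' u = ∫ y, (gderiv d σ x y u) • y ∂p := by
      rw [hM'def, ContinuousLinearMap.integral_apply igs]
      exact integral_congr_ae (Filter.Eventually.of_forall fun y => by
        simp only [ContinuousLinearMap.smulRight_apply])
    rw [h1, hint_inner i3 v]
    have he : (fun y => ⟪(gderiv d σ x y u) • y, v⟫) = fun y =>
        (σ ^ 2)⁻¹ * ((⟪y, u⟫ * ⟪y, v⟫) * gaussDensity d σ (x - y)) -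
          ((σ ^ 2)⁻¹ * ⟪x, u⟫) * (⟪y, v⟫ * gaussDensity d σ (x - y)) := by
      funext y
      rw [real_inner_smul_left, gderiv_apply, inner_sub_left]
      ring
    rw [he, integral_sub (i2.const_mul _) ((i1 v).const_mul _), integral_const_mul,
      integral_const_mul, ← hA, ← hBv]
  -- tilted covariance in terms of A, Bu, Bv
  have hcov : tiltedCov d σ p x u v = A * N⁻¹ - (Bu * N⁻¹) * (Bv * N⁻¹) := by
    rw [tiltedCov]
    simp only [div_eq_mul_inv, ← hNdef, ← mul_assoc]
    rw [integral_mul_const, integral_mul_const, integral_mul_const, ← hA, ← hBu, ← hBv]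
    ring
  -- put everything together
  simp only [ContinuousLinearMap.add_apply, ContinuousLinearMap.coe_smul', Pi.smul_apply,
    ContinuousLinearMap.smulRight_apply, ContinuousLinearMap.comp_apply,
    ContinuousLinearMap.one_apply, smul_eq_mul, inner_add_left, real_inner_smul_left]
  rw [hM'uv, hN'u, hMxv, hcov]
  rw [← hNdef]
  have hNne := hNpos.ne'
  field_simp
  ring

end Measure
end Stmt17Aux

/-- For a probability measure `p` supported in the ball of radius `ρ`, the posterior
mean map `e` is differentiable with Jacobian `Σ_x/σ²`; in particular its Jacobian is a
positive semidefinite symmetric operator of operator norm at most `ρ²/σ²`. -/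


theorem stmt_17 (d : ℕ) (ρ σ : ℝ) (hρ : 0 < ρ) (hσ : 0 < σ)
    (p : Measure (EuclideanSpace ℝ (Fin d))) [IsProbabilityMeasure p]
    (hsupp : p (Metric.closedBall (0 : EuclideanSpace ℝ (Fin d)) ρ)ᶜ = 0) :
    Differentiable ℝ (tiltedMean d σ p) ∧
      (∀ x u v : EuclideanSpace ℝ (Fin d),
        ⟪fderiv ℝ (tiltedMean d σ p) x u, v⟫ = (1 / σ ^ 2) * tiltedCov d σ p x u v) ∧
      (∀ x u v : EuclideanSpace ℝ (Fin d),
        ⟪fderiv ℝ (tiltedMean d σ p) x u, v⟫ = ⟪u, fderiv ℝ (tiltedMean d σ p) x v⟫) ∧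
      (∀ x v : EuclideanSpace ℝ (Fin d), 0 ≤ ⟪fderiv ℝ (tiltedMean d σ p) x v, v⟫) ∧
      (∀ x, ‖fderiv ℝ (tiltedMean d σ p) x‖ ≤ ρ ^ 2 / σ ^ 2) := by
  have hae : ∀ᵐ y ∂p, ‖y‖ ≤ ρ := by
    rw [MeasureTheory.ae_iff]
    refine measure_mono_null (fun y hy => ?_) hsupp
    simpa [Metric.mem_closedBall, dist_zero_right] using hy
  choose T hT1 hT2 using fun x => Stmt17Aux.key hρ hσ hae x
  have hfd : ∀ x, fderiv ℝ (tiltedMean d σ p) x = T x := fun x => (hT1 x).fderiv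
  have hformula : ∀ x u v : EuclideanSpace ℝ (Fin d), ⟪fderiv ℝ (tiltedMean d σ p) x u, v⟫
      = (1 / σ ^ 2) * tiltedCov d σ p x u v := fun x u v => by rw [hfd]; exact hT2 x u v
  have hsymm : ∀ x u v : EuclideanSpace ℝ (Fin d), ⟪fderiv ℝ (tiltedMean d σ p) x u, v⟫
      = ⟪u, fderiv ℝ (tiltedMean d σ p) x v⟫ := by
    intro x u v
    rw [hformula, Stmt17Aux.cov_symm, ← hformula, real_inner_comm]
  have hquad : ∀ x v : EuclideanSpace ℝ (Fin d),
      0 ≤ ⟪fderiv ℝ (tiltedMean d σ p) x v, v⟫ ∧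
      ⟪fderiv ℝ (tiltedMean d σ p) x v, v⟫ ≤ ρ ^ 2 / σ ^ 2 * ‖v‖ ^ 2 := by
    intro x v
    obtain ⟨h0, h1⟩ := Stmt17Aux.cov_bounds hρ hσ hae x v
    rw [hformula]
    refine ⟨mul_nonneg (by positivity) h0, ?_⟩
    calc (1 / σ ^ 2) * tiltedCov d σ p x v v ≤ (1 / σ ^ 2) * (ρ ^ 2 * ‖v‖ ^ 2) :=
        mul_le_mul_of_nonneg_left h1 (by positivity)
      _ = ρ ^ 2 / σ ^ 2 * ‖v‖ ^ 2 := by ring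
  refine ⟨fun x => (hT1 x).differentiableAt, hformula, hsymm, fun x v => (hquad x v).1,
    fun x => ?_⟩
  have hk : (0:ℝ) ≤ ρ ^ 2 / σ ^ 2 := by positivity
  refine ContinuousLinearMap.opNorm_le_bound _ hk fun u => ?_
  set J := fderiv ℝ (tiltedMean d σ p) x with hJ
  have hCS : ∀ w z : EuclideanSpace ℝ (Fin d), ⟪J w, z⟫ ^ 2 ≤ ⟪J w, w⟫ * ⟪J z, z⟫ := by
    intro w z
    have hq : ∀ t : ℝ, 0 ≤ ⟪J z, z⟫ * (t * t) + (2 * ⟪J w, z⟫) * t + ⟪J w, w⟫ := by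
      intro t
      have h0 := (hquad x (w + t • z)).1
      have e2 : ⟪J z, w⟫ = ⟪J w, z⟫ := (hsymm x z w).trans (real_inner_comm _ _)
      have e1 : ⟪J (w + t • z), w + t • z⟫
          = ⟪J w, w⟫ + t * ⟪J w, z⟫ + t * ⟪J z, w⟫ + (t * t) * ⟪J z, z⟫ := by
        rw [map_add, _root_.map_smul]
        simp only [inner_add_left, inner_add_right, real_inner_smul_left, real_inner_smul_right]
        ring
      rw [e1, e2] at h0
      linarith
    have hd := discrim_le_zero hq
    rw [discrim] at hd
    nlinarith [hd]
  have h2 := hCS u (J u)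
  have h3 := (hquad x u).2
  have h4 := (hquad x (J u)).2
  have h5 := (hquad x u).1
  have h6 := (hquad x (J u)).1
  rw [real_inner_self_eq_norm_sq] at h2
  have h7 : (‖J u‖ ^ 2) ^ 2 ≤ (ρ ^ 2 / σ ^ 2 * ‖u‖ ^ 2) * (ρ ^ 2 / σ ^ 2 * ‖J u‖ ^ 2) :=
    h2.trans (mul_le_mul h3 h4 h6 (by positivity))
  rcases eq_or_lt_of_le (norm_nonneg (J u)) with h8 | h8
  · rw [← h8]
    positivity
  · have h10 : ‖J u‖ ^ 2 ≤ (ρ ^ 2 / σ ^ 2 * ‖u‖) ^ 2 := by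
      nlinarith [h7, mul_pos h8 h8]
    nlinarith [h10, h8, mul_nonneg hk (norm_nonneg u)]


end
end
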